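/- arXiv:2205.10700 — 8 statements merged into one kernel-verified Lean document; each statement's English description precedes it below -/
import Mathlib

section
/- Let a and b be elements of a group that generate a free subgroup of rank 2 (i.e., ⟨a,b⟩ ≅ ⟨a⟩ * ⟨b⟩ ≅ F₂). If i, j, ℓ, n are nonzero integers and k, ℓ' are integers such that (a^k b^ℓ)^i = (a^n b^{ℓ'})^j, then k = n, ℓ = ℓ', and i = j. -/
open FreeGroup List

namespace SamePowerAux

/-- A word with no adjacent cancelling pair is fixed by `reduce`. -/
lemma reduce_eq_self {α : Type*} [DecidableEq α] (L : List (α × Bool))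
    (h : L.Chain' fun p q => ¬(p.1 = q.1 ∧ p.2 = !q.2)) : FreeGroup.reduce L = L := by
  induction L with
  | nil => rfl
  | cons x L ih =>
    rw [FreeGroup.reduce.cons, ih h.tail]
    cases L with
    | nil => rfl
    | cons y t =>
      exact if_neg (List.isChain_cons_cons.mp h).1

/-- the block `s^m` as a word -/
def blk {α : Type*} (s : α) (m : ℤ) : List (α × Bool) :=
  List.replicate m.natAbs (s, decide (0 < m))

lemma of_zpow_eq_mk {α : Type*} [DecidableEq α] (s : α) (m : ℤ) :
    (FreeGroup.of s : FreeGroup α) ^ m = FreeGroup.mk (blk s m) := by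
  rcases lt_trichotomy m 0 with hm | hm | hm
  · have h1 : (FreeGroup.of s : FreeGroup α) ^ m = ((FreeGroup.of s) ^ ((-m).toNat : ℕ))⁻¹ := by
      rw [← zpow_natCast, ← zpow_neg]
      congr 1
      omega
    rw [h1]
    have h2 : ((FreeGroup.of s : FreeGroup α) ^ ((-m).toNat : ℕ)) =
        FreeGroup.mk (List.replicate (-m).toNat (s, true)) := by
      rw [← FreeGroup.toWord_of_pow (α := α) s (-m).toNat, FreeGroup.mk_toWord]
    rw [h2, FreeGroup.inv_mk]
    unfold blk FreeGroup.invRev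
    congr 1
    rw [List.map_replicate, List.reverse_replicate]
    congr 1
    · omega
    · simp [hm.not_gt]
  · subst hm
    simp [blk, FreeGroup.one_eq_mk]
  · have h1 : (FreeGroup.of s : FreeGroup α) ^ m = (FreeGroup.of s) ^ (m.toNat : ℕ) := by
      rw [← zpow_natCast]; congr 1; omega
    have h2 : blk s m = List.replicate m.toNat (s, true) := by
      unfold blk
      rw [show decide (0 < m) = true by simp [hm]]
      congr 1
      omega
    rw [h1, h2, ← FreeGroup.toWord_of_pow (α := α) s m.toNat, FreeGroup.mk_toWord]

/-- the word `(s^k (!s)^ℓ)^m` -/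
def word (s : Bool) (k ℓ : ℤ) (m : ℕ) : List (Bool × Bool) :=
  (List.replicate m (blk s k ++ blk (!s) ℓ)).flatten

lemma pow_eq_mk_word (s : Bool) (k ℓ : ℤ) (m : ℕ) :
    (FreeGroup.of s ^ k * FreeGroup.of (!s) ^ ℓ) ^ m = FreeGroup.mk (word s k ℓ m) := by
  rw [of_zpow_eq_mk, of_zpow_eq_mk, FreeGroup.mul_mk, FreeGroup.pow_mk]
  rfl

lemma word_succ (s : Bool) (k ℓ : ℤ) (m : ℕ) :
    word s k ℓ (m + 1) = blk s k ++ blk (!s) ℓ ++ word s k ℓ m := by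
  unfold word
  rw [List.replicate_succ, List.flatten_cons]

lemma head?_word (s : Bool) (k ℓ : ℤ) (hk : k ≠ 0) (m : ℕ) (hm : m ≠ 0) :
    (word s k ℓ m).head? = some (s, decide (0 < k)) := by
  obtain ⟨m, rfl⟩ := Nat.exists_eq_succ_of_ne_zero hm
  rw [word_succ]
  have : k.natAbs ≠ 0 := by omega
  simp [blk, List.head?_append, List.head?_replicate, this]

lemma chain'_word (s : Bool) (k ℓ : ℤ) (hk : k ≠ 0) (hℓ : ℓ ≠ 0) (m : ℕ) :
    (word s k ℓ m).Chain' fun p q => ¬(p.1 = q.1 ∧ p.2 = !q.2) := by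
  induction m with
  | zero => simp [word, List.Chain']
  | succ m ih =>
    rw [word_succ]
    have hrep : ∀ (t : Bool) (c : Bool) (n : ℕ),
        (List.replicate n (t, c)).Chain' fun p q : Bool × Bool => ¬(p.1 = q.1 ∧ p.2 = !q.2) := by
      intro t c n
      exact List.isChain_replicate_of_rel n (by simp)
    refine List.isChain_append.2 ⟨List.isChain_append.2 ⟨hrep _ _ _, hrep _ _ _, ?_⟩, ih, ?_⟩
    · intro x hx y hy
      simp only [blk] at hx hy
      rw [List.getLast?_replicate, if_neg (show ¬k.natAbs = 0 by omega)] at hx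
      rw [List.head?_replicate, if_neg (show ¬ℓ.natAbs = 0 by omega)] at hy
      cases hx; cases hy
      simp
    · intro x hx y hy
      rcases m with - | m
      · simp [word] at hy
      rw [head?_word s k ℓ hk _ (Nat.succ_ne_zero m)] at hy
      cases hy
      rw [List.getLast?_append, blk, List.getLast?_replicate] at hx
      have hℓ' : ℓ.natAbs ≠ 0 := by omega
      simp only [hℓ', if_neg, Option.some_or] at hx
      cases hx
      simp

lemma toWord_pow (s : Bool) (k ℓ : ℤ) (hk : k ≠ 0) (hℓ : ℓ ≠ 0) (m : ℕ) :
    ((FreeGroup.of s ^ k * FreeGroup.of (!s) ^ ℓ) ^ m).toWord = word s k ℓ m := by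
  rw [pow_eq_mk_word, FreeGroup.toWord_mk, reduce_eq_self _ (chain'_word s k ℓ hk hℓ m)]

/-- If two lists both start with a nonempty constant block whose entries fail `P`,
followed by lists whose heads (if any) satisfy `P`, then the blocks agree. -/
lemma rep_inj {α : Type*} {P : α → Prop} :
    ∀ {m m' : ℕ} {a a' : α} {l l' : List α},
      List.replicate m a ++ l = List.replicate m' a' ++ l' →
      0 < m → 0 < m' →
      (∀ x ∈ l.head?, P x) → (∀ x ∈ l'.head?, P x) →
      ¬P a → ¬P a' → m = m' ∧ a = a' := by
  intro m
  induction m with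
  | zero => intro m' a a' l l' _ hm; omega
  | succ m ih =>
    intro m' a a' l l' heq _ hm' hl hl' ha ha'
    rcases Nat.exists_eq_succ_of_ne_zero (Nat.pos_iff_ne_zero.mp hm') with ⟨m'', rfl⟩
    rw [List.replicate_succ, List.replicate_succ, List.cons_append, List.cons_append,
      List.cons.injEq] at heq
    obtain ⟨rfl, heq⟩ := heq
    rcases Nat.eq_zero_or_pos m with rfl | hm0 <;> rcases Nat.eq_zero_or_pos m'' with rfl | hm''0
    · exact ⟨rfl, rfl⟩
    · exfalso
      rcases Nat.exists_eq_succ_of_ne_zero (Nat.pos_iff_ne_zero.mp hm''0) with ⟨p, rfl⟩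
      simp only [List.replicate, List.nil_append, List.cons_append] at heq
      subst heq
      exact ha' (hl _ rfl)
    · exfalso
      rcases Nat.exists_eq_succ_of_ne_zero (Nat.pos_iff_ne_zero.mp hm0) with ⟨p, rfl⟩
      simp only [List.replicate, List.nil_append, List.cons_append] at heq
      rw [← heq] at hl'
      exact ha (hl' _ rfl)
    · obtain ⟨h1, h2⟩ := ih heq hm0 hm''0 hl hl' ha ha'
      exact ⟨by omega, h2⟩

lemma head_P_word (k ℓ : ℤ) (hk : k ≠ 0) (m : ℕ) :
    ∀ x ∈ (word true k ℓ m).head?, (x : Bool × Bool).1 = true := by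
  intro x hx
  rcases Nat.eq_zero_or_pos m with rfl | hm
  · simp [word] at hx
  · rw [head?_word true k ℓ hk m (by omega)] at hx
    cases hx; rfl

lemma main_pos (k ℓ n ℓ' : ℤ) (hk : k ≠ 0) (hℓ : ℓ ≠ 0) (hn : n ≠ 0) (hℓ' : ℓ' ≠ 0)
    (i j : ℕ) (hi : i ≠ 0) (hj : j ≠ 0)
    (heq : (FreeGroup.of true ^ k * FreeGroup.of false ^ ℓ) ^ i
         = (FreeGroup.of true ^ n * FreeGroup.of false ^ ℓ') ^ j) :
    k = n ∧ ℓ = ℓ' := by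
  have hfalse : (false : Bool) = !true := rfl
  rw [hfalse] at heq
  have hw : word true k ℓ i = word true n ℓ' j := by
    rw [← toWord_pow true k ℓ hk hℓ i, ← toWord_pow true n ℓ' hn hℓ' j, heq]
  obtain ⟨i0, rfl⟩ := Nat.exists_eq_succ_of_ne_zero hi
  obtain ⟨j0, rfl⟩ := Nat.exists_eq_succ_of_ne_zero hj
  rw [word_succ, word_succ, List.append_assoc, List.append_assoc] at hw
  -- first block
  have hkpos : 0 < k.natAbs := by omega
  have hnpos : 0 < n.natAbs := by omega
  have hlpos : 0 < ℓ.natAbs := by omega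
  have hl'pos : 0 < ℓ'.natAbs := by omega
  have h1 := rep_inj (P := fun x : Bool × Bool => x.1 = false) hw hkpos hnpos
    (by
      intro x hx
      rw [List.head?_append, blk, List.head?_replicate,
        if_neg (Nat.pos_iff_ne_zero.mp hlpos), Option.some_or] at hx
      cases hx; rfl)
    (by
      intro x hx
      rw [List.head?_append, blk, List.head?_replicate,
        if_neg (Nat.pos_iff_ne_zero.mp hl'pos), Option.some_or] at hx
      cases hx; rfl)
    (by simp) (by simp)
  obtain ⟨habs, hsgn⟩ := h1
  have hsgn' : (0 < k) = (0 < n) := by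
    have := congrArg Prod.snd hsgn
    simpa using this
  have hkn : k = n := by
    have h0 : (0 < k) ↔ (0 < n) := by rw [hsgn']
    omega
  refine ⟨hkn, ?_⟩
  -- cancel first block, compare second block
  have hw2 : blk (!true) ℓ ++ word true k ℓ i0 = blk (!true) ℓ' ++ word true n ℓ' j0 := by
    have : (blk true k : List (Bool × Bool)) = blk true n := by
      unfold blk; rw [hkn]
    rw [this] at hw
    exact List.append_cancel_left hw
  have h2 := rep_inj (P := fun x : Bool × Bool => x.1 = true) hw2 hlpos hl'pos
    (head_P_word k ℓ hk i0) (head_P_word n ℓ' hn j0) (by simp) (by simp)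
  obtain ⟨habs2, hsgn2⟩ := h2
  have hsgn2' : (0 < ℓ) = (0 < ℓ') := by
    have := congrArg Prod.snd hsgn2
    simpa using this
  have h0 : (0 < ℓ) ↔ (0 < ℓ') := by rw [hsgn2']
  omega


lemma key (k ℓ n ℓ' i j : ℤ) (hk : k ≠ 0) (hℓ : ℓ ≠ 0) (hn : n ≠ 0) (hℓ' : ℓ' ≠ 0)
    (hi : 0 < i) (hj : j ≠ 0)
    (heq : (FreeGroup.of true ^ k * FreeGroup.of false ^ ℓ) ^ i
         = (FreeGroup.of true ^ n * FreeGroup.of false ^ ℓ') ^ j) :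
    k = n ∧ ℓ = ℓ' := by
  set X : FreeGroup Bool := FreeGroup.of true
  set Y : FreeGroup Bool := FreeGroup.of false
  have e1 : (X ^ k * Y ^ ℓ) ^ i = (X ^ k * Y ^ ℓ) ^ (i.toNat : ℕ) := by
    rw [← zpow_natCast]; congr 1; omega
  rcases hj.lt_or_gt with hjn | hjp
  · -- j < 0 : contradiction via first letters
    exfalso
    have einv : (Y ^ (-ℓ') * X ^ (-n)) = (X ^ n * Y ^ ℓ')⁻¹ := by
      rw [mul_inv_rev, zpow_neg, zpow_neg]
    have e2 : (X ^ n * Y ^ ℓ') ^ j = (Y ^ (-ℓ') * X ^ (-n)) ^ ((-j).toNat : ℕ) := by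
      rw [einv, ← zpow_natCast, show (((-j).toNat : ℕ) : ℤ) = -j by omega,
        inv_zpow, ← zpow_neg, neg_neg]
    rw [e1, e2] at heq
    have hL : ((X ^ k * Y ^ ℓ) ^ (i.toNat : ℕ)).toWord.head? = some (true, decide (0 < k)) := by
      rw [show (X ^ k * Y ^ ℓ) ^ (i.toNat : ℕ)
          = (FreeGroup.of true ^ k * FreeGroup.of (!true) ^ ℓ) ^ (i.toNat : ℕ) from rfl,
        toWord_pow true k ℓ hk hℓ]
      exact head?_word true k ℓ hk _ (by omega)
    have hR : ((Y ^ (-ℓ') * X ^ (-n)) ^ ((-j).toNat : ℕ)).toWord.head?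
        = some (false, decide (0 < -ℓ')) := by
      rw [show (Y ^ (-ℓ') * X ^ (-n)) ^ ((-j).toNat : ℕ)
          = (FreeGroup.of false ^ (-ℓ') * FreeGroup.of (!false) ^ (-n)) ^ ((-j).toNat : ℕ) from
          rfl,
        toWord_pow false (-ℓ') (-n) (by omega) (by omega)]
      exact head?_word false (-ℓ') (-n) (by omega) _ (by omega)
    rw [heq, hR] at hL
    have := congrArg Prod.fst (Option.some.inj hL)
    simp at this
  · -- j > 0
    have e2 : (X ^ n * Y ^ ℓ') ^ j = (X ^ n * Y ^ ℓ') ^ (j.toNat : ℕ) := by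
      rw [← zpow_natCast]; congr 1; omega
    rw [e1, e2] at heq
    exact main_pos k ℓ n ℓ' hk hℓ hn hℓ' i.toNat j.toNat (by omega) (by omega) heq

end SamePowerAux

/-- If `a, b` generate a free subgroup of rank 2 and
`(a^k b^ℓ)^i = (a^n b^{ℓ'})^j` with `i, j, ℓ, n` nonzero, then `k = n`, `ℓ = ℓ'`, `i = j`. -/
theorem same_power {G : Type*} [Group G] (a b : G)
    (hfree : Function.Injective (FreeGroup.lift (fun x : Bool => if x then a else b)))
    (i j ℓ n k ℓ' : ℤ) (hi : i ≠ 0) (hj : j ≠ 0) (hℓ : ℓ ≠ 0) (hn : n ≠ 0)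
    (heq : (a ^ k * b ^ ℓ) ^ i = (a ^ n * b ^ ℓ') ^ j) :
    k = n ∧ ℓ = ℓ' ∧ i = j := by
  classical
  set X : FreeGroup Bool := FreeGroup.of true with hX
  set Y : FreeGroup Bool := FreeGroup.of false with hY
  -- pull the equation back to the free group
  have heqF : (X ^ k * Y ^ ℓ) ^ i = (X ^ n * Y ^ ℓ') ^ j := by
    apply hfree
    simpa [map_zpow, map_mul, hX, hY] using heq
  -- exponent-sum homomorphisms
  have habx : k * i = n * j := by
    have h := congrArg Multiplicative.toAdd (congrArg (FreeGroup.lift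
      (fun t : Bool => if t then Multiplicative.ofAdd (1 : ℤ) else 1)) heqF)
    simp only [map_zpow, _root_.map_mul, hX, hY, FreeGroup.lift_apply_of, if_true, if_false,
      Bool.false_eq_true, toAdd_zpow, toAdd_mul, toAdd_ofAdd, toAdd_one, smul_eq_mul] at h
    linear_combination h
  have haby : ℓ * i = ℓ' * j := by
    have h := congrArg Multiplicative.toAdd (congrArg (FreeGroup.lift
      (fun t : Bool => if t then 1 else Multiplicative.ofAdd (1 : ℤ))) heqF)
    simp only [map_zpow, _root_.map_mul, hX, hY, FreeGroup.lift_apply_of, if_true, if_false,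
      Bool.false_eq_true, toAdd_zpow, toAdd_mul, toAdd_ofAdd, toAdd_one, smul_eq_mul] at h
    linear_combination h
  have hk : k ≠ 0 := by
    intro h
    apply mul_ne_zero hn hj
    rw [← habx, h, zero_mul]
  have hℓ'0 : ℓ' ≠ 0 := by
    intro h
    apply mul_ne_zero hℓ hi
    rw [haby, h, zero_mul]
  have hkey : k = n ∧ ℓ = ℓ' := by
    rcases hi.lt_or_gt with hip | hip
    · have heqF' : (X ^ k * Y ^ ℓ) ^ (-i) = (X ^ n * Y ^ ℓ') ^ (-j) := by
        rw [zpow_neg, zpow_neg, heqF]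
      exact SamePowerAux.key k ℓ n ℓ' (-i) (-j) hk hℓ hn hℓ'0 (by omega) (by omega) heqF'
    · exact SamePowerAux.key k ℓ n ℓ' i j hk hℓ hn hℓ'0 hip hj heqF
  obtain ⟨hkn, hll⟩ := hkey
  refine ⟨hkn, hll, ?_⟩
  rw [hll] at haby
  exact mul_left_cancel₀ hℓ'0 (by linarith [haby] : ℓ' * i = ℓ' * j)
end

section
/- Let Γ be a torsion-free group in which the centralizer of every nontrivial element is cyclic. Then Γ has the unique root property: for all s, t ∈ Γ and every positive integer n, s^n = t^n implies s = t. -/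
/-- Old Mathlib `Monoid.IsTorsionFree` (removed): no nontrivial element has finite order. -/
def Monoid.IsTorsionFree (G : Type*) [Monoid G] : Prop :=
  ∀ g : G, g ≠ 1 → ¬IsOfFinOrder g

/-- A torsion-free group with cyclic centralizers of nontrivial elements
has the unique root property. -/
theorem unique_root_of_cyclic_centralizers {Γ : Type*} [Group Γ]
    (htf : Monoid.IsTorsionFree Γ)
    (hcyc : ∀ g : Γ, g ≠ 1 → IsCyclic (Subgroup.centralizer {g})) :
    ∀ s t : Γ, ∀ m : ℕ, 0 < m → s ^ m = t ^ m → s = t := by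
  intro s t m hm h
  by_cases hs1 : s ^ m = 1
  · have hs : s = 1 := by
      by_contra hs
      exact htf s hs (isOfFinOrder_iff_pow_eq_one.2 ⟨m, hm, hs1⟩)
    have ht : t = 1 := by
      by_contra ht
      exact htf t ht (isOfFinOrder_iff_pow_eq_one.2 ⟨m, hm, h ▸ hs1⟩)
    rw [hs, ht]
  · obtain ⟨c, hc⟩ := (hcyc (s ^ m) hs1).exists_generator
    have hsmem : s ∈ Subgroup.centralizer {s ^ m} := by
      rw [Subgroup.mem_centralizer_singleton_iff]
      exact (pow_mul_comm' s m).symm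
    have htmem : t ∈ Subgroup.centralizer {s ^ m} := by
      rw [Subgroup.mem_centralizer_singleton_iff, h]
      exact (pow_mul_comm' t m).symm
    obtain ⟨a, ha⟩ := hc ⟨s, hsmem⟩
    obtain ⟨b, hb⟩ := hc ⟨t, htmem⟩
    have has : (c : Γ) ^ a = s := congrArg Subtype.val ha
    have hbt : (c : Γ) ^ b = t := congrArg Subtype.val hb
    have hcne : (c : Γ) ≠ 1 := by
      intro hc1
      apply hs1
      rw [← has, hc1, one_zpow, one_pow]
    have hinj : Function.Injective fun n : ℤ => (c : Γ) ^ n :=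
      injective_zpow_iff_not_isOfFinOrder.2 (htf _ hcne)
    have key : (c : Γ) ^ (a * m) = (c : Γ) ^ (b * m) := by
      rw [zpow_mul, zpow_mul, zpow_natCast, zpow_natCast, has, hbt, h]
    have := hinj key
    have hab : a = b := by
      have hm' : (m : ℤ) ≠ 0 := by exact_mod_cast hm.ne'
      exact mul_right_cancel₀ hm' this
    rw [← has, ← hbt, hab]
end

section
/- Let Γ be a group and g ∈ Γ an element of infinite order. Then the virtual centralizer of the cyclic subgroup ⟨g⟩ in Γ equals the union ⋃_{i ≥ 1} C_Γ(g^i) of the centralizers of positive powers of g. -/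
/-- For an element `g` of infinite order, the virtual centralizer of `⟨g⟩`
equals `⋃_{i ≥ 1} C_Γ(g^i)`. -/
theorem virtualCentralizer_zpowers_eq_iUnion_centralizers {Γ : Type*} [Group Γ]
    (g : Γ) (hg : ¬ IsOfFinOrder g) :
    {x : Γ | Set.Finite (Set.range fun n : ℤ => g ^ n * x * g ^ (-n))} =
      ⋃ i ∈ Set.Ici (1 : ℕ), (Subgroup.centralizer {g ^ i} : Set Γ) := by
  ext x
  simp only [Set.mem_setOf_eq, Set.mem_iUnion, Set.mem_Ici, SetLike.mem_coe,
    Subgroup.mem_centralizer_iff]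
  constructor
  · intro hfin
    have hninj : ¬ Function.Injective (fun n : ℤ => g ^ n * x * g ^ (-n)) := fun hinj =>
      Set.infinite_range_of_injective hinj hfin
    rw [Function.not_injective_iff] at hninj
    obtain ⟨m, n, hmn, hne⟩ := hninj
    set d := m - n with hd
    have hd0 : d ≠ 0 := sub_ne_zero.mpr hne
    have key : g ^ d * x = x * g ^ d := by
      have h1 : g ^ (-n) * (g ^ m * x * g ^ (-m)) * g ^ n =
          g ^ (-n) * (g ^ n * x * g ^ (-n)) * g ^ n := by rw [hmn]
      have h2 : g ^ (-n) * (g ^ n * x * g ^ (-n)) * g ^ n = x := by group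
      have h3 : g ^ (-n) * (g ^ m * x * g ^ (-m)) * g ^ n = g ^ d * x * (g ^ d)⁻¹ := by
        rw [hd]; group
      rw [h3, h2] at h1
      conv_rhs => rw [← h1]
      group
    have hcd : Commute (g ^ d) x := key
    have hcd' : Commute (g ^ (d.natAbs : ℤ)) x := by
      rcases Int.natAbs_eq d with he | he
      · rw [← he]; exact hcd
      · have : (d.natAbs : ℤ) = -d := by omega
        rw [this, zpow_neg]
        exact hcd.inv_left
    refine ⟨d.natAbs, by omega, ?_⟩
    rintro h rfl
    have := hcd'.eq
    rw [zpow_natCast] at this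
    exact this
  · intro ⟨i, hi, hcomm⟩
    have hc : ∀ k : ℤ, g ^ ((i : ℤ) * k) * x = x * g ^ ((i : ℤ) * k) := by
      intro k
      have h : Commute (g ^ (i : ℕ)) x := hcomm (g ^ i) rfl
      have h2 := h.zpow_left k
      rw [← zpow_natCast g i, ← zpow_mul] at h2
      exact h2.eq
    have hper : ∀ n : ℤ, g ^ n * x * g ^ (-n) = g ^ (n % i) * x * g ^ (-(n % i)) := by
      intro n
      set a : ℤ := (i : ℤ) * (n / i) with ha
      set b : ℤ := n % i with hb
      have hn : n = a + b := (Int.mul_ediv_add_emod n i).symm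
      have hax : g ^ a * x = x * g ^ a := hc (n / i)
      have step : g ^ n * x * g ^ (-n) = g ^ b * (g ^ a * x * (g ^ a)⁻¹) * (g ^ b)⁻¹ := by
        rw [hn]; group
      rw [step, hax, mul_inv_cancel_right, zpow_neg]
    have hsub : Set.range (fun n : ℤ => g ^ n * x * g ^ (-n)) ⊆
        (fun n : ℤ => g ^ n * x * g ^ (-n)) '' (Set.Ico 0 (i : ℤ)) := by
      rintro _ ⟨n, rfl⟩
      refine ⟨n % i, ⟨Int.emod_nonneg n (by positivity), ?_⟩, (hper n).symm⟩
      exact Int.emod_lt_of_pos n (by exact_mod_cast hi)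
    exact Set.Finite.subset ((Set.finite_Ico _ _).image _) hsub
end

section
/- Let Γ be a group and B ≤ Γ a malnormal subgroup (g B g^{-1} ∩ B = {1} for all g ∈ Γ \ B). Then for any infinite subgroup A ≤ B, the virtual centralizer vC_Γ(A) is contained in B. -/
/-- If `B` is a malnormal subgroup of `Γ` and `A ≤ B` is infinite, then the
virtual centralizer of `A` is contained in `B`. -/
theorem virtualCentralizer_le_of_malnormal {Γ : Type*} [Group Γ] (B : Subgroup Γ)
    (hmal : ∀ g : Γ, g ∉ B → ∀ x ∈ B, g * x * g⁻¹ ∈ B → g * x * g⁻¹ = 1)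
    (A : Subgroup Γ) (hAB : A ≤ B) (hAinf : (A : Set Γ).Infinite) :
    {x : Γ | Set.Finite {y : Γ | ∃ a ∈ A, y = a * x * a⁻¹}} ⊆ (B : Set Γ) := by
  intro x hx
  by_contra hxB
  obtain ⟨a, ha, b, hb, hab, hfab⟩ :=
    hAinf.exists_ne_map_eq_of_mapsTo (f := fun a => a * x * a⁻¹)
      (t := {y : Γ | ∃ a ∈ A, y = a * x * a⁻¹}) (fun a ha => ⟨a, ha, rfl⟩) hx
  set c := b⁻¹ * a with hc
  have hcA : c ∈ A := A.mul_mem (A.inv_mem hb) ha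
  have hc1 : c ≠ 1 := by
    intro h
    apply hab
    have h' : b⁻¹ * a = 1 := h
    exact (eq_of_inv_mul_eq_one h').symm
  have hcomm : x * c * x⁻¹ = c := by
    have : a * x * a⁻¹ = b * x * b⁻¹ := hfab
    have h2 : c * x = x * c := by
      have := congrArg (fun z => b⁻¹ * z * a) this
      simp only [hc]
      group at this ⊢
      exact this
    rw [mul_inv_eq_iff_eq_mul]; exact h2.symm
  have := hmal x hxB c (hAB hcA) (by rw [hcomm]; exact hAB hcA)
  rw [hcomm] at this
  exact hc1 this
end

section
/- Let Γ = Γ₁ * Γ₂ be a free product with s ∈ Γ₂ nontrivial and g, g₂, g₃ ∈ Γ₁ nontrivial. Then s g₂ s^{-1} (g s g₃ s^{-1})^i ≠ (g s g₃ s^{-1})^i s g₂ s^{-1} for all i ≥ 1. -/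
open Monoid.Coprod

section Key

open Monoid Monoid.CoprodI

private theorem word_prod_injective {ι : Type*} {M : ι → Type*} [∀ i, Monoid (M i)] :
    Function.Injective (Monoid.CoprodI.Word.prod (M := M)) := by
  classical exact Monoid.CoprodI.Word.equiv.symm.injective

private theorem key {M : Bool → Type*} [∀ b, Group (M b)]
    (s : M true) (hs : s ≠ 1) (g g₂ g₃ : M false)
    (hg : g ≠ 1) (hg₂ : g₂ ≠ 1) (hg₃ : g₃ ≠ 1) (i : ℕ) (hi : 1 ≤ i) :
    of s * of g₂ * (of s)⁻¹ * (of g * of s * of g₃ * (of s)⁻¹) ^ i ≠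
      (of g * of s * of g₃ * (of s)⁻¹) ^ i * (of s * of g₂ * (of s)⁻¹) := by
  intro h
  have htf : (true : Bool) ≠ false := by decide
  have hft : (false : Bool) ≠ true := by decide
  have hs' : s⁻¹ ≠ 1 := inv_ne_one.2 hs
  -- the word for A = s g₂ s⁻¹
  set wA : NeWord M true true :=
    ((NeWord.singleton s hs).append htf (NeWord.singleton g₂ hg₂)).append hft
      (NeWord.singleton s⁻¹ hs') with hwA
  have hAprod : wA.prod = of s * of g₂ * (of s)⁻¹ := by
    simp [hwA, NeWord.append_prod, NeWord.prod_singleton]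
  -- the word for B = g s g₃ s⁻¹
  set wB : NeWord M false true :=
    (((NeWord.singleton g hg).append hft (NeWord.singleton s hs)).append htf
      (NeWord.singleton g₃ hg₃)).append hft (NeWord.singleton s⁻¹ hs') with hwB
  have hBprod : wB.prod = of g * of s * of g₃ * (of s)⁻¹ := by
    simp [hwB, NeWord.append_prod, NeWord.prod_singleton]
  -- words for powers of B
  have hpow : ∀ n : ℕ, ∃ w : NeWord M false true,
      w.prod = (of g * of s * of g₃ * (of s)⁻¹) ^ (n + 1) := by
    intro n
    induction n with
    | zero => exact ⟨wB, by simpa using hBprod⟩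
    | succ m ih =>
      obtain ⟨w, hw⟩ := ih
      refine ⟨wB.append htf w, ?_⟩
      rw [NeWord.append_prod, hBprod, hw, ← pow_succ']
  obtain ⟨n, rfl⟩ : ∃ n, i = n + 1 := ⟨i - 1, (Nat.succ_pred_eq_of_pos hi).symm⟩
  obtain ⟨w, hw⟩ := hpow n
  -- the big word for B^{-i} A B^i
  set W : NeWord M true true := (w.inv.append hft wA).append htf w with hW
  have hWprod : W.prod = wA.prod := by
    rw [hW, NeWord.append_prod, NeWord.append_prod, NeWord.inv_prod, hw, hAprod]
    rw [mul_assoc, h, inv_mul_cancel_left]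
  -- conclude equality of words, hence of lengths
  have hword : W.toWord = wA.toWord := word_prod_injective hWprod
  have hlen : W.toWord.toList.length = wA.toWord.toList.length := by rw [hword]
  have h1 : w.inv.toList ≠ [] := w.inv.toList_ne_nil
  have h2 : w.toList ≠ [] := w.toList_ne_nil
  simp only [hW, hwA, NeWord.toWord, NeWord.toList, List.length_append,
    List.length_singleton] at hlen
  have l1 : 1 ≤ w.inv.toList.length := List.length_pos_iff.2 h1
  have l2 : 1 ≤ w.toList.length := List.length_pos_iff.2 h2
  omega

universe u v

private theorem main_aux {Γ₁ : Type u} {Γ₂ : Type v} [Group Γ₁] [Group Γ₂]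
    (s : Γ₂) (hs : s ≠ 1) (g g₂ g₃ : Γ₁) (hg : g ≠ 1) (hg₂ : g₂ ≠ 1) (hg₃ : g₃ ≠ 1) :
    ∀ i : ℕ, 1 ≤ i →
      Monoid.Coprod.inr s * Monoid.Coprod.inl g₂ * (Monoid.Coprod.inr s : Γ₁ ∗ Γ₂)⁻¹ *
          (Monoid.Coprod.inl g * Monoid.Coprod.inr s * Monoid.Coprod.inl g₃ *
            (Monoid.Coprod.inr s : Γ₁ ∗ Γ₂)⁻¹) ^ i ≠
        (Monoid.Coprod.inl g * Monoid.Coprod.inr s * Monoid.Coprod.inl g₃ *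
            (Monoid.Coprod.inr s : Γ₁ ∗ Γ₂)⁻¹) ^ i *
          (Monoid.Coprod.inr s * Monoid.Coprod.inl g₂ *
            (Monoid.Coprod.inr s : Γ₁ ∗ Γ₂)⁻¹) := by
  intro i hi h
  let M : Bool → Type (max u v) := fun b => cond b (ULift.{u} Γ₂) (ULift.{v} Γ₁)
  letI : ∀ b, Group (M b) := fun b => by
    cases b
    · exact (inferInstance : Group (ULift Γ₁))
    · exact (inferInstance : Group (ULift Γ₂))
  let e₁ : Γ₁ →* ULift.{v} Γ₁ := (MulEquiv.ulift.symm : Γ₁ ≃* ULift Γ₁).toMonoidHom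
  let e₂ : Γ₂ →* ULift.{u} Γ₂ := (MulEquiv.ulift.symm : Γ₂ ≃* ULift Γ₂).toMonoidHom
  let φ : Γ₁ ∗ Γ₂ →* Monoid.CoprodI M :=
    Monoid.Coprod.lift ((Monoid.CoprodI.of (i := false)).comp e₁)
      ((Monoid.CoprodI.of (i := true)).comp e₂)
  refine key (M := M) (ULift.up s) (fun hc => hs (congrArg ULift.down hc))
    (ULift.up g) (ULift.up g₂) (ULift.up g₃)
    (fun hc => hg (congrArg ULift.down hc))
    (fun hc => hg₂ (congrArg ULift.down hc))
    (fun hc => hg₃ (congrArg ULift.down hc)) i hi ?_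
  have := congrArg φ h
  simp only [map_mul, map_pow, map_inv, Monoid.Coprod.lift_apply_inl,
    Monoid.Coprod.lift_apply_inr, MonoidHom.comp_apply, φ, e₁, e₂,
    MulEquiv.coe_toMonoidHom, MulEquiv.ulift] at this
  exact this

end Key

/-- In `Γ = Γ₁ ∗ Γ₂` with `s ∈ Γ₂` nontrivial and `g, g₂, g₃ ∈ Γ₁`
nontrivial, `s g₂ s⁻¹ (g s g₃ s⁻¹)^i ≠ (g s g₃ s⁻¹)^i s g₂ s⁻¹` for all `i ≥ 1`. -/
theorem free_product_noncommuting_identity {Γ₁ Γ₂ : Type*} [Group Γ₁] [Group Γ₂]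
    (s : Γ₂) (hs : s ≠ 1) (g g₂ g₃ : Γ₁) (hg : g ≠ 1) (hg₂ : g₂ ≠ 1) (hg₃ : g₃ ≠ 1) :
    ∀ i : ℕ, 1 ≤ i →
      Monoid.Coprod.inr s * Monoid.Coprod.inl g₂ * (Monoid.Coprod.inr s : Γ₁ ∗ Γ₂)⁻¹ *
          (Monoid.Coprod.inl g * Monoid.Coprod.inr s * Monoid.Coprod.inl g₃ *
            (Monoid.Coprod.inr s : Γ₁ ∗ Γ₂)⁻¹) ^ i ≠
        (Monoid.Coprod.inl g * Monoid.Coprod.inr s * Monoid.Coprod.inl g₃ *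
            (Monoid.Coprod.inr s : Γ₁ ∗ Γ₂)⁻¹) ^ i *
          (Monoid.Coprod.inr s * Monoid.Coprod.inl g₂ *
            (Monoid.Coprod.inr s : Γ₁ ∗ Γ₂)⁻¹) :=
  main_aux s hs g g₂ g₃ hg hg₂ hg₃
end

section
/- In Γ = ℤ * ℤ/2ℤ = ⟨t⟩ * ⟨s⟩, for γ, g ∈ Γ, the element s γ g s g^{-1} γ^{-1} is trivial if and only if γg ∈ ⟨s⟩ = {1, s}; and whenever it is nontrivial, it has infinite order. -/
open Monoid.Coprod List
namespace S15
abbrev Γ : Type := Multiplicative ℤ ∗ Multiplicative (ZMod 2)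
def Valid (l : List ℤ) : Prop := l ≠ [] ∧ ∀ x ∈ l.tail.dropLast, x ≠ 0
def W : Type := {l : List ℤ // Valid l}

lemma valid_cons_iff (a : ℤ) (l : List ℤ) : Valid (a :: l) ↔ ∀ x ∈ l.dropLast, x ≠ 0 := by
  simp [Valid]

lemma mem_dropLast_of_mem_tail_dropLast {l : List ℤ} {x : ℤ} (h : x ∈ l.tail.dropLast) :
    x ∈ l.dropLast := by
  cases l with
  | nil => simp at h
  | cons a t =>
    cases t with
    | nil => simp at h
    | cons b t' =>
      rw [List.dropLast_cons_of_ne_nil (by simp)]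
      simp only [List.tail_cons] at h
      exact List.mem_cons_of_mem _ h

lemma valid_tail {a : ℤ} {l : List ℤ} (h : Valid (a :: l)) (hl : l ≠ []) : Valid l := by
  refine ⟨hl, fun x hx => ?_⟩
  exact (valid_cons_iff a l).1 h x (mem_dropLast_of_mem_tail_dropLast hx)

def sFun (w : W) : W :=
  if h : w.val.head? = some 0 ∧ 1 < w.val.length then
    ⟨w.val.tail, by
      refine ⟨?_, ?_⟩
      · intro hn
        have := w.val.length_tail
        rw [hn] at this
        simp at this
        omega
      · intro x hx
        exact w.prop.2 x (mem_dropLast_of_mem_tail_dropLast hx)⟩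
  else
    ⟨0 :: w.val, by
      rw [valid_cons_iff]
      intro x hx
      rcases w with ⟨l, hl⟩
      simp only at hx h
      cases l with
      | nil => simp at hx
      | cons a t =>
        cases t with
        | nil => simp at hx
        | cons b t' =>
          rw [List.dropLast_cons_of_ne_nil (by simp)] at hx
          rcases List.mem_cons.1 hx with rfl | hx'
          · intro h0
            exact h ⟨by simp [h0], by simp⟩
          · exact hl.2 x hx'⟩

lemma sFun_val (w : W) : (sFun w).val =
    if w.val.head? = some 0 ∧ 1 < w.val.length then w.val.tail else 0 :: w.val := by
  unfold sFun
  split_ifs with h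
  · exact congrArg Subtype.val (dif_pos h)
  · exact congrArg Subtype.val (dif_neg h)

lemma sFun_invol : Function.Involutive sFun := by
  intro w
  apply Subtype.ext
  rw [sFun_val, sFun_val]
  rcases w with ⟨l, hl⟩
  simp only
  by_cases h : l.head? = some 0 ∧ 1 < l.length
  · rw [if_pos h]
    obtain ⟨a, t, rfl⟩ : ∃ a t, l = a :: t := by
      cases l with
      | nil => exact absurd rfl hl.1
      | cons a t => exact ⟨a, t, rfl⟩
    have ha : a = 0 := by simpa using h.1
    subst ha
    have ht : t ≠ [] := by
      intro h'; subst h'; simp at h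
    have hcond : ¬ ((t : List ℤ).head? = some 0 ∧ 1 < t.length) := by
      rintro ⟨h1, h2⟩
      obtain ⟨b, t', rfl⟩ : ∃ b t', t = b :: t' := by
        cases t with
        | nil => exact absurd rfl ht
        | cons b t' => exact ⟨b, t', rfl⟩
      have hb : b = 0 := by simpa using h1
      have ht' : t' ≠ [] := by
        intro h'; subst h'; simp at h2
      have : b ≠ 0 := hl.2 b (by
        simp only [List.tail_cons]
        rw [List.dropLast_cons_of_ne_nil ht']
        exact List.mem_cons_self)
      exact this hb
    rw [List.tail_cons, if_neg hcond]
  · rw [if_neg h]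
    have hcond : ((0 :: l).head? = some 0 ∧ 1 < (0 :: l).length) := by
      refine ⟨rfl, ?_⟩
      have : l ≠ [] := hl.1
      cases l with
      | nil => exact absurd rfl this
      | cons a t => simp
    rw [if_pos hcond, List.tail_cons]

def sPerm : Equiv.Perm W := sFun_invol.toPerm

def tFun (m : ℤ) (w : W) : W :=
  ⟨(w.val.headI + m) :: w.val.tail, by
    rw [valid_cons_iff]
    intro x hx
    exact w.prop.2 x hx⟩

lemma headI_cons_tail (l : List ℤ) (h : l ≠ []) : l.headI :: l.tail = l := by
  cases l with
  | nil => exact absurd rfl h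
  | cons a t => rfl

lemma tFun_zero (w : W) : tFun 0 w = w := by
  apply Subtype.ext
  show (w.val.headI + 0) :: w.val.tail = w.val
  rw [add_zero]
  exact headI_cons_tail _ w.prop.1

lemma tFun_add (a b : ℤ) (w : W) : tFun (a + b) w = tFun a (tFun b w) := by
  apply Subtype.ext
  show (w.val.headI + (a + b)) :: w.val.tail
      = (((w.val.headI + b) :: w.val.tail).headI + a) :: ((w.val.headI + b) :: w.val.tail).tail
  simp [List.headI]
  ring

def tEquiv (m : ℤ) : Equiv.Perm W where
  toFun := tFun m
  invFun := tFun (-m)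
  left_inv := fun w => by rw [← tFun_add]; simp [tFun_zero]
  right_inv := fun w => by rw [← tFun_add]; simp [tFun_zero]

def Thom : Multiplicative ℤ →* Equiv.Perm W where
  toFun := fun m => tEquiv m.toAdd
  map_one' := by
    ext w
    exact tFun_zero w
  map_mul' := fun a b => by
    ext w
    exact tFun_add _ _ w

def Shom : Multiplicative (ZMod 2) →* Equiv.Perm W where
  toFun := fun z => if z = 1 then 1 else sPerm
  map_one' := by simp
  map_mul' := fun a b => by
    have hcases : ∀ z : Multiplicative (ZMod 2), z = 1 ∨ z = Multiplicative.ofAdd (1 : ZMod 2) := by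
      decide
    have hs2 : (Multiplicative.ofAdd (1 : ZMod 2)) * (Multiplicative.ofAdd (1 : ZMod 2)) = 1 := by
      decide
    have hne : (Multiplicative.ofAdd (1 : ZMod 2)) ≠ 1 := by decide
    rcases hcases a with rfl | rfl <;> rcases hcases b with rfl | rfl <;>
      simp [hs2, hne]
    · ext w
      exact (sFun_invol w).symm

def Φ : Γ →* Equiv.Perm W := Monoid.Coprod.lift Thom Shom

def sΓ : Γ := Monoid.Coprod.inr (Multiplicative.ofAdd (1 : ZMod 2))
def tΓ (m : ℤ) : Γ := Monoid.Coprod.inl (Multiplicative.ofAdd m)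

lemma s_mul_s : sΓ * sΓ = 1 := by
  rw [sΓ, ← MonoidHom.map_mul]
  have : (Multiplicative.ofAdd (1 : ZMod 2)) * (Multiplicative.ofAdd (1 : ZMod 2)) = 1 := by decide
  rw [this, MonoidHom.map_one]

lemma s_inv : sΓ⁻¹ = sΓ := by
  rw [inv_eq_iff_mul_eq_one, s_mul_s]

lemma t_zero : tΓ 0 = 1 := by
  rw [tΓ, ofAdd_zero, MonoidHom.map_one]

lemma t_add (a b : ℤ) : tΓ (a + b) = tΓ a * tΓ b := by
  rw [tΓ, ofAdd_add, MonoidHom.map_mul]; rfl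

def evalL : List ℤ → Γ
  | [] => sΓ
  | a :: l => tΓ a * sΓ * evalL l

lemma Φ_s : Φ sΓ = sPerm := by
  rw [Φ, sΓ, Monoid.Coprod.lift_apply_inr, Shom]
  simp only [MonoidHom.coe_mk, OneHom.coe_mk]
  rw [if_neg (by decide)]

lemma Φ_t (m : ℤ) : Φ (tΓ m) = tEquiv m := by
  rw [Φ, tΓ, Monoid.Coprod.lift_apply_inl]
  rfl

lemma Φ_s_apply (w : W) : Φ sΓ w = sFun w := by rw [Φ_s]; rfl
lemma Φ_t_apply (m : ℤ) (w : W) : Φ (tΓ m) w = tFun m w := by rw [Φ_t]; rfl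

-- evaluation compatibility for the s generator
lemma eval_sFun (w : W) : evalL (sFun w).val = sΓ * evalL w.val := by
  rw [sFun_val]
  split_ifs with h
  · -- w.val = 0 :: tail, nonempty tail
    obtain ⟨a, t, hw⟩ : ∃ a t, w.val = a :: t := by
      cases hv : w.val with
      | nil => exact absurd hv w.prop.1
      | cons a t => exact ⟨a, t, rfl⟩
    have ha : a = 0 := by rw [hw] at h; simpa using h.1
    subst ha
    rw [hw]
    show evalL t = sΓ * evalL (0 :: t)
    rw [evalL, t_zero, one_mul, ← mul_assoc, s_mul_s, one_mul]
  · rw [evalL, t_zero, one_mul]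

lemma eval_tFun (m : ℤ) (w : W) : evalL (tFun m w).val = tΓ m * evalL w.val := by
  obtain ⟨a, t, hw⟩ : ∃ a t, w.val = a :: t := by
    cases hv : w.val with
    | nil => exact absurd hv w.prop.1
    | cons a t => exact ⟨a, t, rfl⟩
  have : (tFun m w).val = (a + m) :: t := by
    show (w.val.headI + m) :: w.val.tail = _
    rw [hw]; rfl
  rw [this, hw, evalL, evalL]
  rw [show a + m = m + a by ring, t_add, mul_assoc, mul_assoc, mul_assoc]

lemma eval_act (g : Γ) (w : W) : evalL ((Φ g) w).val = g * evalL w.val := by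
  induction g using Monoid.Coprod.induction_on' generalizing w with
  | one => simp
  | inl_mul m x ih =>
    rw [map_mul, mul_assoc]
    have : Φ (Monoid.Coprod.inl m) = tEquiv m.toAdd := by
      rw [show (Monoid.Coprod.inl m : Γ) = tΓ m.toAdd from rfl, Φ_t]
    rw [this]
    show evalL ((tFun m.toAdd) (Φ x w)).val = _
    rw [eval_tFun, ih]
    rfl
  | inr_mul n x ih =>
    rw [map_mul, mul_assoc]
    have hn : n = 1 ∨ n = Multiplicative.ofAdd (1 : ZMod 2) := by
      revert n; decide
    rcases hn with rfl | rfl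
    · simp [ih]
    · have : Φ (Monoid.Coprod.inr (Multiplicative.ofAdd (1 : ZMod 2)) : Γ) = sPerm := Φ_s
      rw [this]
      show evalL (sFun (Φ x w)).val = _
      rw [eval_sFun, ih]
      rfl

def basept : W := ⟨[0], ⟨by simp, by simp⟩⟩

lemma eval_basept : evalL basept.val = 1 := by
  show evalL [0] = 1
  rw [evalL, evalL, t_zero, one_mul, s_mul_s]

lemma eval_nf (g : Γ) : evalL ((Φ g) basept).val = g := by
  rw [eval_act, eval_basept, mul_one]

lemma tFun_val (m : ℤ) (w : W) : (tFun m w).val = (w.val.headI + m) :: w.val.tail := rfl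

lemma evalL_cons_apply (a : ℤ) (c : List ℤ) (w : W) :
    Φ (evalL (a :: c)) w = tFun a (sFun (Φ (evalL c) w)) := by
  rw [evalL, map_mul, map_mul]
  show Φ (tΓ a) ((Φ sΓ) ((Φ (evalL c)) w)) = _
  rw [Φ_t_apply, Φ_s_apply]

lemma sFun_prepend {w : W} (h : ¬(w.val.head? = some 0 ∧ 1 < w.val.length)) :
    (sFun w).val = 0 :: w.val := by
  rw [sFun_val, if_neg h]

lemma sFun_prepend' {w : W} {b : ℤ} {t : List ℤ} (hw : w.val = b :: t) (hb : b ≠ 0) :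
    (sFun w).val = 0 :: w.val := by
  apply sFun_prepend
  rintro ⟨h1, _⟩
  rw [hw] at h1
  exact hb (by simpa using h1)

lemma headI_ne_zero_of_tail {c : List ℤ} (hc : c ≠ [])
    (h : ∀ x ∈ c, x ≠ 0) : c.headI ≠ 0 := by
  cases c with
  | nil => exact absurd rfl hc
  | cons b t => exact h b (List.mem_cons_self)

lemma C0nice : ∀ c : List ℤ, c ≠ [] → (∀ x ∈ c.tail, x ≠ 0) →
    ((Φ (evalL c)) basept).val = c := by
  intro c
  induction c with
  | nil => intro h; exact absurd rfl h
  | cons a c' ih =>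
    intro _ htail
    rw [evalL_cons_apply]
    simp only [List.tail_cons] at htail
    cases hc' : c' with
    | nil =>
      subst hc'
      show (tFun a (sFun (Φ (evalL []) basept))).val = [a]
      rw [evalL, Φ_s_apply, sFun_invol basept, tFun_val]
      show (0 + a) :: ([] : List ℤ) = [a]
      rw [zero_add]
    | cons b t =>
      subst hc'
      have hne : b :: t ≠ [] := by simp
      have hIH := ih hne (fun x hx => htail x (List.mem_of_mem_tail hx))
      have hb : (b :: t).headI ≠ 0 := htail b (List.mem_cons_self)
      have hpre : (sFun (Φ (evalL (b :: t)) basept)).val = 0 :: (b :: t) := by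
        rw [sFun_prepend' (t := (b :: t).tail) (b := (b :: t).headI) _ hb, hIH]
        rw [hIH]
        simp
      rw [tFun_val, hpre]
      show (0 + a) :: (b :: t) = a :: b :: t
      rw [zero_add]

lemma C1 : ∀ c : List ℤ, c ≠ [] → (∀ x ∈ c.tail, x ≠ 0) →
    ∀ (m : List ℤ) (hv : Valid (0 :: m)), m ≠ [] →
    ((Φ (evalL c)) ⟨0 :: m, hv⟩).val = c ++ m := by
  intro c
  induction c with
  | nil => intro h; exact absurd rfl h
  | cons a c' ih =>
    intro _ htail m hv hm
    rw [evalL_cons_apply a c' ⟨0 :: m, hv⟩]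
    simp only [List.tail_cons] at htail
    cases hc' : c' with
    | nil =>
      subst hc'
      show (tFun a (sFun (Φ (evalL []) ⟨0 :: m, hv⟩))).val = [a] ++ m
      rw [evalL, Φ_s_apply ⟨0 :: m, hv⟩, sFun_invol ⟨0 :: m, hv⟩, tFun_val a ⟨0 :: m, hv⟩]
      show (0 + a) :: m = [a] ++ m
      rw [zero_add]
      rfl
    | cons b t =>
      subst hc'
      have hne : b :: t ≠ [] := by simp
      have hIH := ih hne (fun x hx => htail x (List.mem_of_mem_tail hx)) m hv hm
      have hb : ((b :: t) ++ m).headI ≠ 0 := htail b (List.mem_cons_self)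
      have hpre : (sFun (Φ (evalL (b :: t)) ⟨0 :: m, hv⟩)).val = 0 :: ((b :: t) ++ m) := by
        rw [sFun_prepend' (t := ((b :: t) ++ m).tail) (b := ((b :: t) ++ m).headI) _ hb, hIH]
        rw [hIH]
        simp
      rw [tFun_val, hpre]
      show (0 + a) :: ((b :: t) ++ m) = (a :: b :: t) ++ m
      rw [zero_add]
      rfl

lemma t_inv (a : ℤ) : (tΓ a)⁻¹ = tΓ (-a) := by
  rw [inv_eq_iff_mul_eq_one, ← t_add]
  simp [t_zero]

lemma evalL_append : ∀ c : List ℤ, c ≠ [] → ∀ m : List ℤ,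
    evalL (c ++ m) = evalL c * sΓ * evalL m := by
  intro c
  induction c with
  | nil => intro h; exact absurd rfl h
  | cons a c' ih =>
    intro _ m
    cases hc' : c' with
    | nil =>
      show evalL (a :: m) = evalL [a] * sΓ * evalL m
      rw [evalL, evalL, evalL]
      rw [mul_assoc (tΓ a * sΓ), s_mul_s, mul_one]
    | cons b t =>
      subst hc'
      show evalL (a :: ((b :: t) ++ m)) = evalL (a :: b :: t) * sΓ * evalL m
      rw [evalL, ih (by simp) m]
      simp only [evalL]
      group

lemma evalL_rev_neg : ∀ c : List ℤ, c ≠ [] →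
    evalL ((c.map Neg.neg).reverse) = (evalL c)⁻¹ := by
  intro c
  induction c with
  | nil => intro h; exact absurd rfl h
  | cons a c' ih =>
    intro _
    cases hc' : c' with
    | nil =>
      show evalL [-a] = (evalL [a])⁻¹
      rw [evalL, evalL, evalL, evalL]
      rw [mul_assoc, s_mul_s, mul_one, mul_assoc, s_mul_s, mul_one, t_inv]
    | cons b t =>
      subst hc'
      have hrev : (((a :: b :: t)).map Neg.neg).reverse
          = (((b :: t)).map Neg.neg).reverse ++ [-a] := by
        simp
      rw [hrev, evalL_append _ (by simp) _, ih (by simp)]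
      show (evalL (b :: t))⁻¹ * sΓ * evalL [-a] = (tΓ a * sΓ * evalL (b :: t))⁻¹
      rw [show evalL [-a] = tΓ (-a) by rw [evalL, evalL, mul_assoc, s_mul_s, mul_one]]
      rw [mul_inv_rev, mul_inv_rev, s_inv, t_inv, mul_assoc]

def inA (v : W) : Prop := ∃ m : List ℤ, m ≠ [] ∧ v.val = 0 :: m

lemma basept_not_inA : ¬ inA basept := by
  rintro ⟨m, hm, hv⟩
  have : ([0] : List ℤ) = 0 :: m := hv
  simp at this
  exact hm this

lemma all_ne_of (c : List ℤ) (h : ∀ x ∈ c, x ≠ 0) : ∀ x ∈ c.tail, x ≠ 0 :=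
  fun x hx => h x (List.mem_of_mem_tail hx)

lemma key_step (c : List ℤ) (hc : c ≠ []) (hall : ∀ x ∈ c, x ≠ 0) (v : W)
    (hv : v = basept ∨ inA v) :
    inA ((Φ (sΓ * evalL c * sΓ * (evalL c)⁻¹)) v) := by
  set d : List ℤ := (c.map Neg.neg).reverse with hd
  have hdne : d ≠ [] := by
    simp [hd]
    exact hc
  have hdall : ∀ x ∈ d, x ≠ 0 := by
    intro x hx
    rw [hd, List.mem_reverse, List.mem_map] at hx
    obtain ⟨y, hy, rfl⟩ := hx
    simpa using hall y hy
  have hinv : (evalL c)⁻¹ = evalL d := (evalL_rev_neg c hc).symm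
  rw [hinv, map_mul, map_mul, map_mul]
  show inA ((Φ sΓ) ((Φ (evalL c)) ((Φ sΓ) ((Φ (evalL d)) v))))
  -- step 1 : apply evalL d
  have step1 : ∃ (e : List ℤ), e ≠ [] ∧ (∀ x ∈ e.dropLast, x ≠ 0) ∧ e.headI = d.headI ∧
      ((Φ (evalL d)) v).val = e := by
    rcases hv with rfl | ⟨m, hm, hvm⟩
    · exact ⟨d, hdne, fun x hx => hdall x (List.dropLast_subset _ hx),
        rfl, C0nice d hdne (all_ne_of d hdall)⟩
    · refine ⟨d ++ m, by simp [hdne], ?_, ?_, ?_⟩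
      · intro x hx
        rw [List.dropLast_append_of_ne_nil hm] at hx
        rcases List.mem_append.1 hx with h1 | h1
        · exact hdall x h1
        · exact v.prop.2 x (by rw [hvm]; simpa using h1)
      · obtain ⟨u, us, hdu⟩ : ∃ u us, d = u :: us := by
          cases hdd : d with
          | nil => exact absurd hdd hdne
          | cons u us => exact ⟨u, us, rfl⟩
        rw [hdu]
        rfl
      · have hv2 : Valid (0 :: m) := hvm ▸ v.prop
        have hveq : v = (⟨0 :: m, hv2⟩ : W) := Subtype.ext hvm
        rw [hveq]
        exact C1 d hdne (all_ne_of d hdall) m hv2 hm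
  obtain ⟨e, hene, heall, hehead, heval⟩ := step1
  -- step 2 : sFun prepends 0 since head e = head d ≠ 0
  have hheadne : e.headI ≠ 0 := by
    rw [hehead]
    exact headI_ne_zero_of_tail hdne hdall
  have step2 : ((Φ sΓ) ((Φ (evalL d)) v)).val = 0 :: e := by
    rw [Φ_s_apply]
    rw [sFun_prepend' (b := e.headI) (t := e.tail) _ hheadne]
    · rw [heval]
    · rw [heval]
      exact (headI_cons_tail e hene).symm
  -- validity of 0 :: e
  have hval0e : Valid (0 :: e) := by
    rw [valid_cons_iff]
    exact heall
  have step2' : (Φ sΓ) ((Φ (evalL d)) v) = ⟨0 :: e, hval0e⟩ := Subtype.ext step2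
  -- step 3 : apply evalL c via C1
  have step3 : ((Φ (evalL c)) ((Φ sΓ) ((Φ (evalL d)) v))).val = c ++ e := by
    rw [step2']
    exact C1 c hc (all_ne_of c hall) e hval0e hene
  -- step 4 : final sFun prepends since head c ≠ 0
  have hce : (c ++ e).headI ≠ 0 := by
    cases c with
    | nil => exact absurd rfl hc
    | cons u us => exact hall u (List.mem_cons_self)
  refine ⟨c ++ e, by simp [hc], ?_⟩
  rw [Φ_s_apply]
  rw [sFun_prepend' (b := (c ++ e).headI) (t := (c ++ e).tail) _ hce]
  · rw [step3]
  · rw [step3]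
    exact (headI_cons_tail _ (by simp [hc])).symm

lemma key (c : List ℤ) (hc : c ≠ []) (hall : ∀ x ∈ c, x ≠ 0) :
    ¬ IsOfFinOrder (sΓ * evalL c * sΓ * (evalL c)⁻¹) := by
  set y : Γ := sΓ * evalL c * sΓ * (evalL c)⁻¹ with hy
  have hpow : ∀ n : ℕ, inA ((Φ (y ^ (n + 1))) basept) := by
    intro n
    induction n with
    | zero =>
      rw [pow_one]
      exact key_step c hc hall basept (Or.inl rfl)
    | succ n ih =>
      rw [pow_succ']
      rw [map_mul]
      exact key_step c hc hall _ (Or.inr ih)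
  intro hfin
  obtain ⟨n, hn, hyn⟩ := isOfFinOrder_iff_pow_eq_one.mp hfin
  have h1 := hpow (n - 1)
  rw [Nat.sub_add_cancel hn, hyn, map_one] at h1
  exact basept_not_inA h1

lemma mem_self_of_cons {x a : ℤ} {t : List ℤ} (hx : x ∈ a :: t) : x = a ∨ x ∈ t :=
  List.mem_cons.1 hx

lemma H1 (l : List ℤ) (hval : Valid l) (hh : l.headI ≠ 0) :
    ¬ IsOfFinOrder (sΓ * evalL l * sΓ * (evalL l)⁻¹) := by
  rcases List.eq_nil_or_concat l with rfl | ⟨l'', z, rfl⟩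
  · exact absurd rfl hval.1
  · rw [List.concat_eq_append] at hval hh ⊢
    rcases eq_or_ne l'' [] with rfl | hl''
    · -- l = [z]
      rw [List.nil_append] at hval hh ⊢
      have hz : z ≠ 0 := by simpa using hh
      exact key [z] (by simp) (by simpa using hz)
    · -- l'' nonempty
      have hint : ∀ x ∈ l''.tail, x ≠ 0 := by
        intro x hx
        apply hval.2
        rw [show (l'' ++ [z]).tail = l''.tail ++ [z] by
          cases l'' with
          | nil => exact absurd rfl hl''
          | cons u us => rfl]
        rw [List.dropLast_concat]
        exact hx
      have hhead'' : l''.headI ≠ 0 := by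
        rwa [show (l'' ++ [z]).headI = l''.headI by
          cases l'' with
          | nil => exact absurd rfl hl''
          | cons u us => rfl] at hh
      have hall'' : ∀ x ∈ l'', x ≠ 0 := by
        intro x hx
        cases l'' with
        | nil => exact absurd rfl hl''
        | cons u us =>
          rcases mem_self_of_cons hx with rfl | hx'
          · exact hhead''
          · exact hint x hx'
      rcases eq_or_ne z 0 with rfl | hz
      · -- trailing s : strip it
        have heq : evalL (l'' ++ [0]) = evalL l'' * sΓ := by
          rw [evalL_append l'' hl'' [0]]
          rw [show evalL [0] = 1 from eval_basept, mul_one]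
        rw [heq]
        have hgid : sΓ * (evalL l'' * sΓ) * sΓ * (evalL l'' * sΓ)⁻¹
            = sΓ * evalL l'' * sΓ * (evalL l'')⁻¹ := by group
        rw [hgid]
        exact key l'' hl'' hall''
      · -- no trailing s : all entries nonzero
        apply key (l'' ++ [z]) (by simp)
        intro x hx
        rcases List.mem_append.1 hx with h1 | h1
        · exact hall'' x h1
        · rw [List.mem_singleton.1 h1]; exact hz

lemma finOrder_conj {a b : Γ} (h : IsOfFinOrder (a * b * a⁻¹)) : IsOfFinOrder b := by
  obtain ⟨n, hn, hyn⟩ := isOfFinOrder_iff_pow_eq_one.mp h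
  rw [conj_pow] at hyn
  refine isOfFinOrder_iff_pow_eq_one.mpr ⟨n, hn, ?_⟩
  have h2 := congrArg (fun x => a⁻¹ * x * a) hyn
  simpa [mul_assoc] using h2

lemma ML (w : Γ) (h1 : w ≠ 1) (hs : w ≠ sΓ) :
    ¬ IsOfFinOrder (sΓ * w * sΓ * w⁻¹) := by
  have hval := ((Φ w) basept).prop
  have hw : evalL ((Φ w) basept).val = w := eval_nf w
  set l := ((Φ w) basept).val with hl
  obtain ⟨a, l', hal⟩ : ∃ a l', l = a :: l' := by
    cases hc : l with
    | nil => exact absurd hc hval.1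
    | cons a l' => exact ⟨a, l', rfl⟩
  rcases eq_or_ne a 0 with rfl | ha
  · -- leading s
    cases hl' : l' with
    | nil =>
      exfalso
      apply h1
      rw [← hw, hal, hl']
      exact eval_basept
    | cons b l'' =>
      have hb : b ≠ 0 := by
        rcases eq_or_ne l'' [] with rfl | hne''
        · -- l = [0, b] : if b = 0 then w = sΓ
          intro hb0
          apply hs
          rw [← hw, hal, hl', hb0]
          show tΓ 0 * sΓ * (tΓ 0 * sΓ * sΓ) = sΓ
          rw [t_zero, one_mul, s_mul_s, mul_one]
        · -- b interior
          apply hval.2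
          rw [hal, hl', List.tail_cons, List.dropLast_cons_of_ne_nil hne'']
          exact List.mem_cons_self
      have hval' : Valid l' := by
        rw [hl']
        refine ⟨by simp, fun x hx => ?_⟩
        apply hval.2
        rw [hal, List.tail_cons]
        exact mem_dropLast_of_mem_tail_dropLast (by rw [hl']; exact hx)
      have hkey := H1 l' hval' (by rw [hl']; simpa using hb)
      have hwu : w = sΓ * evalL l' := by
        rw [← hw, hal]
        show tΓ 0 * sΓ * evalL l' = sΓ * evalL l'
        rw [t_zero, one_mul]
      intro hfin
      apply hkey
      apply finOrder_conj (a := sΓ)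
      have hgid : sΓ * (sΓ * evalL l' * sΓ * (evalL l')⁻¹) * sΓ⁻¹
          = sΓ * (sΓ * evalL l') * sΓ * (sΓ * evalL l')⁻¹ := by group
      rw [hgid, ← hwu]
      exact hfin
  · rw [← hw]
    exact H1 l hval (by rw [hal]; simpa using ha)

lemma s_zpow (k : ℤ) : sΓ ^ k = 1 ∨ sΓ ^ k = sΓ := by
  rcases Int.even_or_odd k with ⟨r, rfl⟩ | ⟨r, rfl⟩
  · left
    rw [show r + r = 2 * r by ring, zpow_mul]
    rw [show sΓ ^ (2 : ℤ) = sΓ * sΓ by rw [zpow_two], s_mul_s, one_zpow]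
  · right
    rw [zpow_add, zpow_one, zpow_mul]
    rw [show sΓ ^ (2 : ℤ) = sΓ * sΓ by rw [zpow_two], s_mul_s, one_zpow, one_mul]

lemma ZP (g : Γ) : g ∈ Subgroup.zpowers sΓ ↔ g = 1 ∨ g = sΓ := by
  constructor
  · rintro ⟨k, rfl⟩
    exact s_zpow k
  · rintro (rfl | rfl)
    · exact Subgroup.one_mem _
    · exact Subgroup.mem_zpowers _

lemma main_w (w : Γ) :
    (sΓ * w * sΓ * w⁻¹ = 1 ↔ w ∈ Subgroup.zpowers sΓ) ∧
    (sΓ * w * sΓ * w⁻¹ ≠ 1 → ¬ IsOfFinOrder (sΓ * w * sΓ * w⁻¹)) := by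
  have htriv : w = 1 ∨ w = sΓ → sΓ * w * sΓ * w⁻¹ = 1 := by
    rintro (rfl | rfl)
    · rw [mul_one, inv_one, mul_one, s_mul_s]
    · rw [s_inv]
      rw [show sΓ * sΓ * sΓ * sΓ = (sΓ * sΓ) * (sΓ * sΓ) by group, s_mul_s, mul_one]
  constructor
  · constructor
    · intro h1
      rw [ZP]
      by_contra hc
      push_neg at hc
      refine ML w hc.1 hc.2 ?_
      rw [h1]
      exact IsOfFinOrder.one
    · intro hmem
      exact htriv ((ZP w).1 hmem)
  · intro hne
    by_cases hmem : w = 1 ∨ w = sΓ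
    · exact absurd (htriv hmem) hne
    · push_neg at hmem
      exact ML w hmem.1 hmem.2

lemma main_lemma (γ g : Γ) :
    (sΓ * γ * g * sΓ * g⁻¹ * γ⁻¹ = 1 ↔ γ * g ∈ Subgroup.zpowers sΓ) ∧
    (sΓ * γ * g * sΓ * g⁻¹ * γ⁻¹ ≠ 1 →
      ¬ IsOfFinOrder (sΓ * γ * g * sΓ * g⁻¹ * γ⁻¹)) := by
  have hX : sΓ * γ * g * sΓ * g⁻¹ * γ⁻¹ = sΓ * (γ * g) * sΓ * (γ * g)⁻¹ := by group
  rw [hX]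
  exact main_w (γ * g)

end S15

open Monoid.Coprod

/-- In `Γ = ℤ * ℤ/2ℤ = ⟨t⟩ * ⟨s⟩`, the element `s γ g s g⁻¹ γ⁻¹` is trivial
iff `γ g ∈ ⟨s⟩`, and whenever nontrivial it has infinite order. -/
theorem s_gamma_g_s_inv_trivial_or_infinite_order :
    ∀ s : Multiplicative ℤ ∗ Multiplicative (ZMod 2),
      s = Monoid.Coprod.inr (Multiplicative.ofAdd (1 : ZMod 2)) →
      ∀ γ g : Multiplicative ℤ ∗ Multiplicative (ZMod 2),
        (s * γ * g * s * g⁻¹ * γ⁻¹ = 1 ↔ γ * g ∈ Subgroup.zpowers s) ∧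
        (s * γ * g * s * g⁻¹ * γ⁻¹ ≠ 1 → ¬ IsOfFinOrder (s * γ * g * s * g⁻¹ * γ⁻¹)) := by
  intro s hs γ g
  subst hs
  exact S15.main_lemma γ g
end

section
/- In Γ = ℤ * ℤ/2ℤ = ⟨t⟩ * ⟨s⟩, the conjugacy class {γ^{-1} s γ : γ ∈ Γ} is a relatively i.c.c. set: for every nontrivial g ∈ Γ, the set {γ^{-1} s γ · g · γ^{-1} s γ : γ ∈ Γ} is infinite. -/
open Monoid.Coprod

namespace Icc16

abbrev Γ := Multiplicative ℤ ∗ Multiplicative (ZMod 2)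
abbrev X := ℤ × List ℤ

def T (k : ℤ) : Γ := Monoid.Coprod.inl (Multiplicative.ofAdd k)
def sEl : Γ := Monoid.Coprod.inr (Multiplicative.ofAdd (1 : ZMod 2))

lemma T_add (a b : ℤ) : T (a + b) = T a * T b := by
  simp [T, ← ofAdd_add, ← map_mul]

lemma Tc' (u v : ℤ) (x : Γ) : T u * (T v * x) = T (u + v) * x := by
  rw [← mul_assoc, ← T_add]

lemma T_zero : T 0 = 1 := by simp [T]

lemma T_inv (k : ℤ) : (T k)⁻¹ = T (-k) := by
  refine inv_eq_of_mul_eq_one_right ?_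
  rw [← T_add]; simp [T_zero]

lemma s_mul_s : sEl * sEl = 1 := by
  have : (Multiplicative.ofAdd (1 : ZMod 2)) * (Multiplicative.ofAdd (1 : ZMod 2)) = 1 := by decide
  simp [sEl, ← map_mul, this]

def sAct : X → X := fun p =>
  if p.1 = 0 then
    match p.2 with
    | [] => (0, [0])
    | x :: r => if x ≠ 0 ∨ r = [] then (x, r) else (0, x :: r)
  else (0, p.1 :: p.2)

lemma sAct_invol : ∀ p, sAct (sAct p) = p := by
  rintro ⟨a, l⟩
  by_cases ha : a = 0
  · subst ha
    match l with
    | [] => simp [sAct]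
    | x :: r =>
      by_cases hx : x ≠ 0 ∨ r = []
      · rcases hx with hx | hx
        · simp [sAct, hx]
        · subst hx
          by_cases hx0 : x = 0 <;> simp [sAct, hx0]
      · simp [sAct, hx]
  · simp [sAct, ha]

def tHom : Multiplicative ℤ →* Function.End X where
  toFun k := fun p => (p.1 + k.toAdd, p.2)
  map_one' := by funext p; simp [Function.End]; rfl
  map_mul' k l := by
    funext p
    refine Prod.ext ?_ rfl
    show p.1 + Multiplicative.toAdd (k * l) = p.1 + Multiplicative.toAdd l + Multiplicative.toAdd k
    rw [toAdd_mul]; ring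

def sHom : Multiplicative (ZMod 2) →* Function.End X where
  toFun z := if z = 1 then id else sAct
  map_one' := by simp; rfl
  map_mul' z w := by
    have hall : ∀ u : Multiplicative (ZMod 2), u = 1 ∨ u = Multiplicative.ofAdd 1 := by decide
    have hz := hall z
    have hw := hall w
    have hne : (Multiplicative.ofAdd (1 : ZMod 2)) ≠ 1 := by decide
    have h11 : (Multiplicative.ofAdd (1 : ZMod 2)) * (Multiplicative.ofAdd (1 : ZMod 2)) = 1 := by
      decide
    rcases hz with rfl | rfl <;> rcases hw with rfl | rfl
    · simp only [one_mul, if_pos rfl]; rfl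
    · simp only [one_mul, if_pos rfl, if_neg hne]; rfl
    · simp only [mul_one, if_pos rfl, if_neg hne]; rfl
    · simp only [h11, if_pos rfl, if_neg hne]
      funext p; exact (sAct_invol p).symm

def act : Γ →* Function.End X := Monoid.Coprod.lift tHom sHom

lemma act_T (k : ℤ) (p : X) : act (T k) p = (p.1 + k, p.2) := by
  show (Monoid.Coprod.lift tHom sHom) (Monoid.Coprod.inl (Multiplicative.ofAdd k)) p = _
  rw [lift_apply_inl]
  rfl

lemma act_s (p : X) : act sEl p = sAct p := by
  have hne : (Multiplicative.ofAdd (1 : ZMod 2)) ≠ 1 := by decide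
  show (Monoid.Coprod.lift tHom sHom) (Monoid.Coprod.inr (Multiplicative.ofAdd 1)) p = _
  rw [lift_apply_inr]
  simp [sHom, hne]

lemma act_mul (x y : Γ) (p : X) : act (x * y) p = act x (act y p) := by
  rw [map_mul]; rfl

def Sw : List ℤ → Γ
  | [] => 1
  | x :: r => sEl * T x * Sw r

lemma Sw_append (A B : List ℤ) : Sw (A ++ B) = Sw A * Sw B := by
  induction A with
  | nil => simp [Sw]
  | cons x r ih => simp [Sw, ih, mul_assoc]

def valid (p : X) : Prop := ∀ x ∈ p.2.dropLast, x ≠ 0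

def decode (p : X) : Γ := T p.1 * Sw p.2

def e : X := (0, [])

lemma valid_e : valid e := by intro x hx; simp [e] at hx

/-- s-action case analysis: validity preservation and decode compatibility. -/
lemma sAct_good (p : X) (hp : valid p) :
    valid (sAct p) ∧ decode (sAct p) = sEl * decode p := by
  rcases p with ⟨a, l⟩
  by_cases ha : a = 0
  · subst ha
    match l with
    | [] =>
      constructor
      · intro x hx; simp [sAct] at hx
      · simp [sAct, decode, Sw, T_zero]
    | x :: r =>
      have hx : x ≠ 0 ∨ r = [] := by
        rcases r with _ | ⟨y, r'⟩
        · exact Or.inr rfl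
        · refine Or.inl (hp x ?_)
          simp [List.dropLast]
      constructor
      · intro z hz
        simp only [sAct, if_pos rfl, if_pos hx] at hz
        exact hp z (by rcases r with _ | _ <;> simp_all [List.dropLast])
      · have hs : sAct (0, x :: r) = (x, r) := by simp [sAct, hx]
        rw [hs]
        simp only [decode, Sw, T_zero, one_mul]
        rw [← mul_assoc, ← mul_assoc, s_mul_s, one_mul]
  · constructor
    · intro z hz
      simp only [sAct, if_neg ha] at hz
      rcases l with _ | ⟨y, r⟩
      · simp [List.dropLast] at hz
      · simp only [List.dropLast] at hz ⊢
        rcases List.mem_cons.mp hz with rfl | hz'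
        · exact ha
        · exact hp z hz'
    · simp [sAct, ha, decode, Sw, T_zero, mul_assoc]

lemma act_good (γ : Γ) : ∀ p : X, valid p →
    valid (act γ p) ∧ decode (act γ p) = γ * decode p := by
  induction γ using Monoid.Coprod.induction_on with
  | inl m =>
    intro p hp
    have : Monoid.Coprod.inl m = T (Multiplicative.toAdd m) := rfl
    rw [this, act_T]
    constructor
    · exact hp
    · show T (p.1 + Multiplicative.toAdd m) * Sw p.2 = _
      rw [show p.1 + Multiplicative.toAdd m = Multiplicative.toAdd m + p.1 by ring, T_add,
        mul_assoc]
      rfl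
  | inr n =>
    intro p hp
    have hall : ∀ u : Multiplicative (ZMod 2), u = 1 ∨ u = Multiplicative.ofAdd 1 := by decide
    rcases hall n with rfl | rfl
    · rw [map_one]
      exact ⟨hp, by simp; rfl⟩
    · have : Monoid.Coprod.inr (Multiplicative.ofAdd (1 : ZMod 2)) = sEl := rfl
      rw [this, act_s]
      exact sAct_good p hp
  | mul x y hx hy =>
    intro p hp
    obtain ⟨h1, h2⟩ := hy p hp
    obtain ⟨h3, h4⟩ := hx (act y p) h1
    rw [act_mul]
    exact ⟨h3, by rw [h4, h2, mul_assoc]⟩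

lemma act_Sw (l : List ℤ) (hl : ∀ x ∈ l.dropLast, x ≠ 0) : act (Sw l) e = (0, l) := by
  induction l with
  | nil => simp [Sw, e]; rfl
  | cons x r ih =>
    have hr : ∀ z ∈ r.dropLast, z ≠ 0 := by
      intro z hz
      exact hl z (by rcases r with _ | _ <;> simp_all [List.dropLast])
    rw [Sw, act_mul, act_mul, ih hr, act_T, act_s]
    rcases r with _ | ⟨y, r'⟩
    · by_cases hx : x = 0 <;> simp [sAct, hx]
    · have hx : x ≠ 0 := hl x (by simp [List.dropLast])
      simp [sAct, hx]

lemma act_decode (p : X) (hp : valid p) : act (decode p) e = p := by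
  rw [decode, act_mul, act_Sw p.2 hp, act_T]
  simp

end Icc16

open Icc16 in
/-- In `Γ = ℤ * ℤ/2ℤ = ⟨t⟩ * ⟨s⟩`, the conjugacy class of `s` is a
relatively i.c.c. set: for every nontrivial `g`, the set
`{γ⁻¹ s γ · g · γ⁻¹ s γ : γ ∈ Γ}` is infinite. -/
theorem conjugacy_class_of_s_rel_icc :
    ∀ s : Multiplicative ℤ ∗ Multiplicative (ZMod 2),
      s = Monoid.Coprod.inr (Multiplicative.ofAdd (1 : ZMod 2)) →
      ∀ g : Multiplicative ℤ ∗ Multiplicative (ZMod 2), g ≠ 1 →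
        (Set.range fun γ : Multiplicative ℤ ∗ Multiplicative (ZMod 2) =>
          γ⁻¹ * s * γ * g * (γ⁻¹ * s * γ)).Infinite := by
  intro s hs g hg
  subst hs
  rcases hp : act g e with ⟨b, L⟩
  have hgood := act_good g e valid_e
  have hval : valid (b, L) := hp ▸ hgood.1
  have hdec : decode (b, L) = g := by
    rw [← hp, hgood.2]
    simp [decode, e, Sw, T_zero]
  rcases List.eq_nil_or_concat' L with rfl | ⟨L', c, rfl⟩
  · -- g = T b, b ≠ 0
    have hgb : g = T b := by rw [← hdec]; simp [decode, Sw]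
    have hb : b ≠ 0 := by
      rintro rfl
      exact hg (by rw [hgb, T_zero])
    set m : ℕ → ℤ := fun n => |b| + 1 + n with hm
    set F : ℕ → Γ := fun n =>
      (T (m n))⁻¹ * sEl * T (m n) * g * ((T (m n))⁻¹ * sEl * T (m n)) with hF
    have hFdec : ∀ n, F n = decode (-(m n), [b, m n]) := by
      intro n
      rw [hF]
      simp only [T_inv, hgb, decode, Sw, mul_one, mul_assoc, Tc']
      ring_nf
    have hkey : ∀ n, act (F n) e = (-(m n), [b, m n]) := by
      intro n
      rw [hFdec n]
      refine act_decode _ ?_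
      intro x hx
      simp only [List.dropLast, List.mem_singleton] at hx
      simpa [hx] using hb
    have hinj : Function.Injective F := by
      intro n1 n2 h
      have h2 := congrArg (fun γ : Γ => act γ e) h
      simp only [hkey] at h2
      have : -(m n1) = -(m n2) := congrArg Prod.fst h2
      simp only [hm, neg_inj] at this
      omega
    exact Set.infinite_of_injective_forall_mem hinj fun n => ⟨T (m n), rfl⟩
  · -- g = T b * (Sw L' * (sEl * T c))
    have hgb : g = T b * (Sw L' * (sEl * T c)) := by
      rw [← hdec]; simp [decode, Sw_append, Sw, mul_assoc]
    have hL' : ∀ x ∈ L', x ≠ 0 := by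
      intro x hx
      exact hval x (by simpa [valid, List.dropLast_concat] using hx)
    set m : ℕ → ℤ := fun n => |b| + |c| + 1 + n with hm
    have hmb : ∀ n, b + m n > 0 := by
      intro n
      have h1 : -|b| ≤ b := neg_abs_le b
      have h2 : (0:ℤ) ≤ |c| := abs_nonneg c
      have h3 : (0:ℤ) ≤ (n : ℤ) := Int.natCast_nonneg n
      simp only [hm]; omega
    have hmc : ∀ n, c - m n < 0 := by
      intro n
      have h1 : c ≤ |c| := le_abs_self c
      have h2 : (0:ℤ) ≤ |b| := abs_nonneg b
      have h3 : (0:ℤ) ≤ (n : ℤ) := Int.natCast_nonneg n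
      simp only [hm]; omega
    set F : ℕ → Γ := fun n =>
      (T (m n))⁻¹ * sEl * T (m n) * g * ((T (m n))⁻¹ * sEl * T (m n)) with hF
    set W : ℕ → X := fun n => (-(m n), (b + m n) :: (L' ++ [c - m n, m n])) with hW
    have hFdec : ∀ n, F n = decode (W n) := by
      intro n
      rw [hF, hW]
      simp only [T_inv, hgb, decode, Sw, Sw_append, mul_one, mul_assoc, Tc']
      ring_nf
    have hWval : ∀ n, valid (W n) := by
      intro n x hx
      have hrw : (b + m n) :: (L' ++ [c - m n, m n]) =
          ((b + m n) :: (L' ++ [c - m n])) ++ [m n] := by simp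
      rw [hW] at hx
      simp only [hrw, List.dropLast_concat] at hx
      rcases List.mem_cons.mp hx with rfl | hx'
      · exact ne_of_gt (hmb n)
      · rcases List.mem_append.mp hx' with hx'' | hx''
        · exact hL' x hx''
        · simp only [List.mem_singleton] at hx''
          subst hx''
          exact ne_of_lt (hmc n)
    have hkey : ∀ n, act (F n) e = W n := by
      intro n
      rw [hFdec n]
      exact act_decode _ (hWval n)
    have hinj : Function.Injective F := by
      intro n1 n2 h
      have h2 := congrArg (fun γ : Γ => act γ e) h
      simp only [hkey] at h2
      have : -(m n1) = -(m n2) := congrArg Prod.fst h2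
      simp only [hm, neg_inj] at this
      omega
    exact Set.infinite_of_injective_forall_mem hinj fun n => ⟨T (m n), rfl⟩
end

section
/- Writing Γ = F₂ ⋊_σ ℤ/2ℤ where σ_s swaps the two free generators of F₂: for every nontrivial g' ∈ F₂, the set {γ^{-1} σ_s(γ) g' σ_s(γ)^{-1} γ : γ ∈ F₂} is infinite. -/
open Matrix Pointwise

namespace SwapTC

abbrev Mat2 := Matrix (Fin 2) (Fin 2) ℤ
abbrev SL2 := Matrix.SpecialLinearGroup (Fin 2) ℤ

/-- The ping-pong space: pairs of reals with irrational ratio. -/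
def PPS : Type := {p : ℝ × ℝ // Irrational (p.1 / p.2)}

lemma irr_key (a b c d : ℤ) (h : a * d - b * c = 1) (x y : ℝ)
    (hxy : Irrational (x / y)) :
    Irrational ((a * x + b * y) / (c * x + d * y)) := by
  have hy : y ≠ 0 := by rintro rfl; simp at hxy
  have hcd : (c : ℝ) * x + d * y ≠ 0 := by
    intro h0
    rcases eq_or_ne (c : ℤ) 0 with hc | hc
    · subst hc
      have hd : (d : ℤ) ≠ 0 := by rintro rfl; omega
      have : (d : ℝ) * y = 0 := by simpa using h0
      rcases mul_eq_zero.1 this with h1 | h1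
      · exact hd (by exact_mod_cast h1)
      · exact hy h1
    · apply hxy
      refine ⟨(-d : ℚ) / (c : ℚ), ?_⟩
      have hcR : (c : ℝ) ≠ 0 := Int.cast_ne_zero.2 hc
      push_cast
      rw [div_eq_div_iff hcR hy]
      linarith [h0]
  rintro ⟨q, hq⟩
  rw [eq_div_iff hcd] at hq
  have hq' : (a : ℝ) * x + b * y = q * ((c : ℝ) * x + d * y) := by linarith [hq]
  rcases eq_or_ne ((a : ℚ) - q * c) 0 with h0 | h0
  · have h0R : (a : ℝ) = q * c := by
      have : (((a : ℚ) - q * c : ℚ) : ℝ) = 0 := by rw [h0]; simp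
      push_cast at this
      linarith
    have h2 : ((q : ℝ) * d - b) * y = 0 := by linear_combination x * h0R - hq'
    have h1R : (b : ℝ) = q * d := by
      rcases mul_eq_zero.1 h2 with h3 | h3
      · linarith
      · exact absurd h3 hy
    have hdet : (a : ℝ) * d - b * c = 1 := by exact_mod_cast h
    have : (1 : ℝ) = 0 := by linear_combination d * h0R - c * h1R - hdet
    exact one_ne_zero this
  · apply hxy
    refine ⟨(q * d - b) / ((a : ℚ) - q * c), ?_⟩
    have h0R : (a : ℝ) - q * c ≠ 0 := by
      have := (Rat.cast_ne_zero (α := ℝ)).2 h0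
      push_cast at this
      convert this using 1
    push_cast
    rw [div_eq_div_iff h0R hy]
    linear_combination -hq'

noncomputable instance : SMul SL2 PPS :=
  ⟨fun M p => ⟨((M.1 0 0 : ℝ) * p.1.1 + (M.1 0 1 : ℝ) * p.1.2,
               (M.1 1 0 : ℝ) * p.1.1 + (M.1 1 1 : ℝ) * p.1.2), by
    apply irr_key _ _ _ _ _ _ _ p.2
    have := M.2
    rw [Matrix.det_fin_two] at this
    exact this⟩⟩

lemma pps_smul_fst (M : SL2) (p : PPS) :
    (M • p).1.1 = (M.1 0 0 : ℝ) * p.1.1 + (M.1 0 1 : ℝ) * p.1.2 := rfl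
lemma pps_smul_snd (M : SL2) (p : PPS) :
    (M • p).1.2 = (M.1 1 0 : ℝ) * p.1.1 + (M.1 1 1 : ℝ) * p.1.2 := rfl

noncomputable instance : MulAction SL2 PPS where
  one_smul p := by
    apply Subtype.ext; apply Prod.ext <;>
      simp [pps_smul_fst, pps_smul_snd, Matrix.SpecialLinearGroup.coe_one, Matrix.one_apply]
  mul_smul M N p := by
    apply Subtype.ext; apply Prod.ext <;>
    · show _ = (_ : ℝ)
      simp only [pps_smul_fst, pps_smul_snd, Matrix.SpecialLinearGroup.coe_mul,
        Matrix.mul_apply, Fin.sum_univ_two]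
      push_cast
      ring

lemma pps_snd_ne (p : PPS) : p.1.2 ≠ 0 := by
  intro h; have := p.2; rw [h] at this; simp at this

lemma pps_fst_ne (p : PPS) : p.1.1 ≠ 0 := by
  intro h; have := p.2; rw [h] at this; simp at this

lemma pps_abs_ne (p : PPS) : |p.1.1| ≠ |p.1.2| := by
  intro h
  rcases abs_eq_abs.1 h with h1 | h1
  · have := p.2; rw [h1, div_self (pps_snd_ne p)] at this
    exact (Rat.not_irrational 1) (by simpa using this)
  · have := p.2
    rw [h1, neg_div, div_self (pps_snd_ne p)] at this
    exact (Rat.not_irrational (-1)) (by simpa using this)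

lemma pps_mul_ne (p : PPS) : p.1.1 * p.1.2 ≠ 0 :=
  mul_ne_zero (pps_fst_ne p) (pps_snd_ne p)

/-- The key inequality step for the ping-pong argument. -/
lemma stepA (x y : ℝ) (hy : y ≠ 0)
    (h : |x| < |y| ∨ (|y| < |x| ∧ 0 < x * y)) :
    |y| < |x + 2 * y| ∧ 0 < (x + 2 * y) * y := by
  have hy' : 0 < |y| := abs_pos.2 hy
  rcases h with h1 | ⟨h1, h2⟩
  · constructor
    · have ha := abs_add_le (x + 2 * y) (-x)
      have e : x + 2 * y + -x = 2 * y := by ring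
      rw [e, abs_neg] at ha
      have h2y : |2 * y| = 2 * |y| := by rw [abs_mul]; simp
      linarith [h2y ▸ ha]
    · have hxy1 : -(|x| * |y|) ≤ x * y := by
        have := neg_abs_le (x * y)
        rw [abs_mul] at this
        linarith
      nlinarith [hxy1, hy', abs_nonneg x, sq_abs y]
  · rcases lt_or_gt_of_ne hy with hyneg | hypos
    · have hxneg : x < 0 := by nlinarith
      have e1 : |y| = -y := abs_of_neg hyneg
      have e2 : |x + 2 * y| = -(x + 2 * y) := abs_of_neg (by linarith)
      constructor
      · rw [e1, e2]; linarith
      · nlinarith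
    · have hxpos : 0 < x := by nlinarith
      have e1 : |y| = y := abs_of_pos hypos
      have e2 : |x + 2 * y| = x + 2 * y := abs_of_pos (by linarith)
      constructor
      · rw [e1, e2]; linarith
      · nlinarith

def Amat : SL2 := ⟨!![1, 2; 0, 1], by simp [Matrix.det_fin_two_of]⟩
def Bmat : SL2 := ⟨!![1, 0; 2, 1], by simp [Matrix.det_fin_two_of]⟩

noncomputable def sanov : Bool → SL2 := fun i => bif i then Bmat else Amat

def Xs : Bool → Set PPS := fun i =>
  {p | (bif i then |p.1.1| < |p.1.2| else |p.1.2| < |p.1.1|) ∧ 0 < p.1.1 * p.1.2}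
def Ys : Bool → Set PPS := fun i =>
  {p | (bif i then |p.1.1| < |p.1.2| else |p.1.2| < |p.1.1|) ∧ p.1.1 * p.1.2 < 0}

lemma coeAinv : ((Amat⁻¹ : SL2) : Mat2) = !![1, -2; 0, 1] := by
  rw [Matrix.SpecialLinearGroup.coe_inv, Matrix.adjugate_fin_two]
  simp [Amat]

lemma coeBinv : ((Bmat⁻¹ : SL2) : Mat2) = !![1, 0; -2, 1] := by
  rw [Matrix.SpecialLinearGroup.coe_inv, Matrix.adjugate_fin_two]
  simp [Bmat]


lemma sanov_false : sanov false = Amat := rfl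
lemma sanov_true : sanov true = Bmat := rfl
lemma sanov_inv_false : sanov⁻¹ false = Amat⁻¹ := rfl
lemma sanov_inv_true : sanov⁻¹ true = Bmat⁻¹ := rfl

lemma Xdisj : Pairwise (Function.onFun Disjoint Xs) := by
  intro i j hij
  show Disjoint (Xs i) (Xs j)
  rw [Set.disjoint_left]
  intro p hpi hpj
  rcases hpi with ⟨h1, h2⟩
  rcases hpj with ⟨h3, h4⟩
  cases i <;> cases j <;>
    first
    | exact hij rfl
    | (simp only [cond_false, cond_true] at h1 h3; linarith)

lemma Ydisj : Pairwise (Function.onFun Disjoint Ys) := by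
  intro i j hij
  show Disjoint (Ys i) (Ys j)
  rw [Set.disjoint_left]
  intro p hpi hpj
  rcases hpi with ⟨h1, h2⟩
  rcases hpj with ⟨h3, h4⟩
  cases i <;> cases j <;>
    first
    | exact hij rfl
    | (simp only [cond_false, cond_true] at h1 h3; linarith)

lemma XYdisj : ∀ i j, Disjoint (Xs i) (Ys j) := by
  intro i j
  rw [Set.disjoint_left]
  intro p hpi hpj
  rcases hpi with ⟨h1, h2⟩
  rcases hpj with ⟨h3, h4⟩
  cases i <;> cases j <;> simp only [cond_false, cond_true] at h1 h3 <;> linarith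

lemma sqrt2_gt_one : (1 : ℝ) < Real.sqrt 2 := by
  nlinarith [Real.sq_sqrt (by norm_num : (2:ℝ) ≥ 0), Real.sqrt_nonneg 2]

lemma Xne : ∀ i, (Xs i).Nonempty := by
  intro i
  cases i
  · refine ⟨⟨(Real.sqrt 2, 1), by simpa using irrational_sqrt_two⟩, ?_, ?_⟩
    · show |(1 : ℝ)| < |Real.sqrt 2|
      rw [abs_one, abs_of_pos (by positivity)]
      exact sqrt2_gt_one
    · show (0 : ℝ) < Real.sqrt 2 * 1
      nlinarith [sqrt2_gt_one]
  · refine ⟨⟨(1, Real.sqrt 2), by rw [one_div]; exact irrational_sqrt_two.inv⟩, ?_, ?_⟩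
    · show |(1 : ℝ)| < |Real.sqrt 2|
      rw [abs_one, abs_of_pos (by positivity)]
      exact sqrt2_gt_one
    · show (0 : ℝ) < 1 * Real.sqrt 2
      nlinarith [sqrt2_gt_one]

lemma pp_hX : ∀ i, sanov i • (Ys i)ᶜ ⊆ Xs i := by
  intro i
  rintro q ⟨p, hp, rfl⟩
  have hy := pps_snd_ne p
  have hx := pps_fst_ne p
  have habs := pps_abs_ne p
  have hmul := pps_mul_ne p
  cases i
  · -- A : (x, y) ↦ (x + 2y, y)
    simp only [Ys, Set.mem_compl_iff, Set.mem_setOf_eq, cond_false] at hp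
    push_neg at hp
    have c1 : (sanov false • p).1.1 = p.1.1 + 2 * p.1.2 := by
      rw [sanov_false, pps_smul_fst]
      norm_num [Amat]
    have c2 : (sanov false • p).1.2 = p.1.2 := by
      rw [sanov_false, pps_smul_snd]
      norm_num [Amat]
    have hyp : |p.1.1| < |p.1.2| ∨ (|p.1.2| < |p.1.1| ∧ 0 < p.1.1 * p.1.2) := by
      rcases habs.lt_or_gt with h1 | h1
      · exact Or.inl h1
      · exact Or.inr ⟨h1, (hp h1).lt_of_ne' hmul⟩
    have hs := stepA p.1.1 p.1.2 hy hyp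
    show (bif false then _ else |(sanov false • p).1.2| < |(sanov false • p).1.1|) ∧
      0 < (sanov false • p).1.1 * (sanov false • p).1.2
    simp only [cond_false]
    rw [c1, c2]
    exact hs
  · -- B : (x, y) ↦ (x, 2x + y)
    simp only [Ys, Set.mem_compl_iff, Set.mem_setOf_eq, cond_true] at hp
    push_neg at hp
    have c1 : (sanov true • p).1.1 = p.1.1 := by
      rw [sanov_true, pps_smul_fst]
      norm_num [Bmat]
    have c2 : (sanov true • p).1.2 = p.1.2 + 2 * p.1.1 := by
      rw [sanov_true, pps_smul_snd]
      norm_num [Bmat]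
      ring
    have hyp : |p.1.2| < |p.1.1| ∨ (|p.1.1| < |p.1.2| ∧ 0 < p.1.2 * p.1.1) := by
      rcases habs.lt_or_gt with h1 | h1
      · refine Or.inr ⟨h1, ?_⟩
        have := (hp h1).lt_of_ne' hmul
        nlinarith
      · exact Or.inl h1
    have hs := stepA p.1.2 p.1.1 hx hyp
    show (bif true then |(sanov true • p).1.1| < |(sanov true • p).1.2| else _) ∧
      0 < (sanov true • p).1.1 * (sanov true • p).1.2
    simp only [cond_true]
    rw [c1, c2]
    exact ⟨hs.1, by nlinarith [hs.2]⟩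

lemma pp_hY : ∀ i, sanov⁻¹ i • (Xs i)ᶜ ⊆ Ys i := by
  intro i
  rintro q ⟨p, hp, rfl⟩
  have hy := pps_snd_ne p
  have hx := pps_fst_ne p
  have habs := pps_abs_ne p
  have hmul := pps_mul_ne p
  cases i
  · -- A⁻¹ : (x, y) ↦ (x - 2y, y)
    simp only [Xs, Set.mem_compl_iff, Set.mem_setOf_eq, cond_false] at hp
    push_neg at hp
    have c1 : ((sanov⁻¹ false) • p).1.1 = p.1.1 - 2 * p.1.2 := by
      rw [sanov_inv_false, pps_smul_fst]
      rw [show ((Amat⁻¹ : SL2)).1 = !![1, -2; 0, 1] from coeAinv]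
      norm_num
      ring
    have c2 : ((sanov⁻¹ false) • p).1.2 = p.1.2 := by
      rw [sanov_inv_false, pps_smul_snd]
      rw [show ((Amat⁻¹ : SL2)).1 = !![1, -2; 0, 1] from coeAinv]
      norm_num
    have hyp : |p.1.1| < |(-p.1.2)| ∨ (|(-p.1.2)| < |p.1.1| ∧ 0 < p.1.1 * (-p.1.2)) := by
      rw [abs_neg]
      rcases habs.lt_or_gt with h1 | h1
      · exact Or.inl h1
      · refine Or.inr ⟨h1, ?_⟩
        have := (hp h1).lt_of_ne hmul
        nlinarith
    have hs := stepA p.1.1 (-p.1.2) (neg_ne_zero.2 hy) hyp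
    rw [show p.1.1 + 2 * -p.1.2 = p.1.1 - 2 * p.1.2 by ring, abs_neg] at hs
    show (bif false then _ else |((sanov⁻¹ false) • p).1.2| < |((sanov⁻¹ false) • p).1.1|) ∧
      ((sanov⁻¹ false) • p).1.1 * ((sanov⁻¹ false) • p).1.2 < 0
    simp only [cond_false]
    rw [c1, c2]
    exact ⟨hs.1, by nlinarith [hs.2]⟩
  · -- B⁻¹ : (x, y) ↦ (x, y - 2x)
    simp only [Xs, Set.mem_compl_iff, Set.mem_setOf_eq, cond_true] at hp
    push_neg at hp
    have c1 : ((sanov⁻¹ true) • p).1.1 = p.1.1 := by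
      rw [sanov_inv_true, pps_smul_fst]
      rw [show ((Bmat⁻¹ : SL2)).1 = !![1, 0; -2, 1] from coeBinv]
      norm_num
    have c2 : ((sanov⁻¹ true) • p).1.2 = p.1.2 - 2 * p.1.1 := by
      rw [sanov_inv_true, pps_smul_snd]
      rw [show ((Bmat⁻¹ : SL2)).1 = !![1, 0; -2, 1] from coeBinv]
      norm_num
      ring
    have hyp : |p.1.2| < |(-p.1.1)| ∨ (|(-p.1.1)| < |p.1.2| ∧ 0 < p.1.2 * (-p.1.1)) := by
      rw [abs_neg]
      rcases habs.lt_or_gt with h1 | h1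
      · refine Or.inr ⟨h1, ?_⟩
        have := (hp h1).lt_of_ne hmul
        nlinarith
      · exact Or.inl h1
    have hs := stepA p.1.2 (-p.1.1) (neg_ne_zero.2 hx) hyp
    rw [show p.1.2 + 2 * -p.1.1 = p.1.2 - 2 * p.1.1 by ring, abs_neg] at hs
    show (bif true then |((sanov⁻¹ true) • p).1.1| < |((sanov⁻¹ true) • p).1.2| else _) ∧
      ((sanov⁻¹ true) • p).1.1 * ((sanov⁻¹ true) • p).1.2 < 0
    simp only [cond_true]
    rw [c1, c2]
    exact ⟨hs.1, by nlinarith [hs.2]⟩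

noncomputable def rep : FreeGroup Bool →* SL2 := FreeGroup.lift sanov

lemma rep_inj : Function.Injective rep :=
  FreeGroup.injective_lift_of_ping_pong sanov Xs Ys Xne Xdisj Ydisj XYdisj pp_hX pp_hY


lemma coeA : ((Amat : SL2) : Mat2) = !![1, 2; 0, 1] := rfl
lemma coeB : ((Bmat : SL2) : Mat2) = !![1, 0; 2, 1] := rfl

lemma coeApow (k : ℕ) : ((Amat ^ k : SL2) : Mat2) = !![1, 2*(k:ℤ); 0, 1] := by
  induction k with
  | zero =>
    rw [pow_zero, Matrix.SpecialLinearGroup.coe_one]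
    norm_num
    exact Matrix.one_fin_two
  | succ n ih =>
    rw [pow_succ, Matrix.SpecialLinearGroup.coe_mul, ih, coeA]
    ext i j
    fin_cases i <;> fin_cases j <;>
      simp [Matrix.mul_apply, Fin.sum_univ_two] <;> push_cast <;> ring

lemma coeBpow (k : ℕ) : ((Bmat ^ k : SL2) : Mat2) = !![1, 0; 2*(k:ℤ), 1] := by
  induction k with
  | zero =>
    rw [pow_zero, Matrix.SpecialLinearGroup.coe_one]
    norm_num
    exact Matrix.one_fin_two
  | succ n ih =>
    rw [pow_succ, Matrix.SpecialLinearGroup.coe_mul, ih, coeB]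
    ext i j
    fin_cases i <;> fin_cases j <;>
      simp [Matrix.mul_apply, Fin.sum_univ_two] <;> push_cast <;> ring

lemma rep_of_true : rep (FreeGroup.of true) = Bmat := by simp [rep, sanov]
lemma rep_of_false : rep (FreeGroup.of false) = Amat := by simp [rep, sanov]

lemma ucoe (k : ℕ) :
    ((rep ((FreeGroup.of true ^ k)⁻¹ * FreeGroup.of false ^ k) : SL2) : Mat2) =
      !![1, 2*(k:ℤ); -(2*(k:ℤ)), 1 - 4*(k:ℤ)^2] := by
  rw [_root_.map_mul, _root_.map_inv, _root_.map_pow, _root_.map_pow, rep_of_true, rep_of_false,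
    Matrix.SpecialLinearGroup.coe_mul, Matrix.SpecialLinearGroup.coe_inv,
    coeBpow, coeApow, Matrix.adjugate_fin_two]
  ext i j
  fin_cases i <;> fin_cases j <;>
    simp [Matrix.mul_apply, Fin.sum_univ_two] <;> ring

/-- The congruence invariant cutting out the Sanov subgroup mod 4. -/
def Pm (M : SL2) : Prop :=
  (4 ∣ M.1 0 0 - 1) ∧ (4 ∣ M.1 1 1 - 1) ∧ (2 ∣ M.1 0 1) ∧ (2 ∣ M.1 1 0)

lemma Pm_one : Pm 1 := by
  refine ⟨⟨0, ?_⟩, ⟨0, ?_⟩, ⟨0, ?_⟩, ⟨0, ?_⟩⟩ <;>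
    simp [Matrix.SpecialLinearGroup.coe_one, Matrix.one_apply]

lemma Pm_mul {M N : SL2} (hM : Pm M) (hN : Pm N) : Pm (M * N) := by
  obtain ⟨⟨a1, ha1⟩, ⟨a2, ha2⟩, ⟨a3, ha3⟩, ⟨a4, ha4⟩⟩ := hM
  obtain ⟨⟨b1, hb1⟩, ⟨b2, hb2⟩, ⟨b3, hb3⟩, ⟨b4, hb4⟩⟩ := hN
  have eM00 : M.1 0 0 = 4*a1 + 1 := by omega
  have eM11 : M.1 1 1 = 4*a2 + 1 := by omega
  have eM01 : M.1 0 1 = 2*a3 := by omega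
  have eM10 : M.1 1 0 = 2*a4 := by omega
  have eN00 : N.1 0 0 = 4*b1 + 1 := by omega
  have eN11 : N.1 1 1 = 4*b2 + 1 := by omega
  have eN01 : N.1 0 1 = 2*b3 := by omega
  have eN10 : N.1 1 0 = 2*b4 := by omega
  have ecoe : ((M * N : SL2) : Mat2) = (M : Mat2) * (N : Mat2) :=
    Matrix.SpecialLinearGroup.coe_mul M N
  have e00 : (M * N : SL2).1 0 0 = M.1 0 0 * N.1 0 0 + M.1 0 1 * N.1 1 0 := by
    rw [ecoe, Matrix.mul_apply, Fin.sum_univ_two]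
  have e11 : (M * N : SL2).1 1 1 = M.1 1 0 * N.1 0 1 + M.1 1 1 * N.1 1 1 := by
    rw [ecoe, Matrix.mul_apply, Fin.sum_univ_two]
  have e01 : (M * N : SL2).1 0 1 = M.1 0 0 * N.1 0 1 + M.1 0 1 * N.1 1 1 := by
    rw [ecoe, Matrix.mul_apply, Fin.sum_univ_two]
  have e10 : (M * N : SL2).1 1 0 = M.1 1 0 * N.1 0 0 + M.1 1 1 * N.1 1 0 := by
    rw [ecoe, Matrix.mul_apply, Fin.sum_univ_two]
  refine ⟨⟨4*a1*b1 + a1 + b1 + a3*b4, ?_⟩, ⟨4*a2*b2 + a2 + b2 + a4*b3, ?_⟩,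
    ⟨(4*a1 + 1)*b3 + a3*(4*b2 + 1), ?_⟩, ⟨a4*(4*b1 + 1) + (4*a2 + 1)*b4, ?_⟩⟩
  · rw [e00, eM00, eM01, eN00, eN10]; ring
  · rw [e11, eM10, eM11, eN01, eN11]; ring
  · rw [e01, eM00, eM01, eN01, eN11]; ring
  · rw [e10, eM10, eM11, eN00, eN10]; ring

lemma Pm_inv {M : SL2} (hM : Pm M) : Pm M⁻¹ := by
  obtain ⟨⟨a1, ha1⟩, ⟨a2, ha2⟩, ⟨a3, ha3⟩, ⟨a4, ha4⟩⟩ := hM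
  have ecoe : ((M⁻¹ : SL2) : Mat2) = !![M.1 1 1, -M.1 0 1; -M.1 1 0, M.1 0 0] := by
    rw [Matrix.SpecialLinearGroup.coe_inv, Matrix.adjugate_fin_two]
  refine ⟨⟨a2, ?_⟩, ⟨a1, ?_⟩, ⟨-a3, ?_⟩, ⟨-a4, ?_⟩⟩ <;>
    · rw [ecoe]
      simp
      omega

lemma rep_mod4 (g : FreeGroup Bool) : Pm (rep g) := by
  refine FreeGroup.induction_on g ?_ ?_ ?_ ?_
  · rw [_root_.map_one]; exact Pm_one
  · intro x
    have : (pure x : FreeGroup Bool) = FreeGroup.of x := rfl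
    cases x
    · rw [rep_of_false]
      refine ⟨⟨0, ?_⟩, ⟨0, ?_⟩, ⟨1, ?_⟩, ⟨0, ?_⟩⟩ <;> rfl
    · rw [rep_of_true]
      refine ⟨⟨0, ?_⟩, ⟨0, ?_⟩, ⟨0, ?_⟩, ⟨1, ?_⟩⟩ <;> rfl
  · intro x hx
    rw [_root_.map_inv]
    exact Pm_inv hx
  · intro x y hx hy
    rw [_root_.map_mul]
    exact Pm_mul hx hy

lemma comm_entries (k : ℕ) (hk : 0 < k) (m : Mat2)
    (h : m * !![1, 2*(k:ℤ); -(2*(k:ℤ)), 1 - 4*(k:ℤ)^2] =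
         !![1, 2*(k:ℤ); -(2*(k:ℤ)), 1 - 4*(k:ℤ)^2] * m) :
    m 1 0 = - m 0 1 ∧ m 1 1 = m 0 0 - 2*(k:ℤ)*(m 0 1) := by
  have hkz : (0:ℤ) < (k:ℤ) := by exact_mod_cast hk
  have h00 := congrFun (congrFun h 0) 0
  have h01 := congrFun (congrFun h 0) 1
  simp [Matrix.mul_apply, Fin.sum_univ_two] at h00 h01
  constructor
  · have e : (2*(k:ℤ)) * (m 0 1 + m 1 0) = 0 := by nlinarith [h00]
    have := mul_eq_zero.1 e
    rcases this with h1 | h1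
    · omega
    · linarith
  · have e : (2*(k:ℤ)) * (m 0 0 - 2*(k:ℤ)*(m 0 1) - m 1 1) = 0 := by nlinarith [h01]
    have := mul_eq_zero.1 e
    rcases this with h1 | h1
    · omega
    · linarith

end SwapTC
/-- Let `σ` be the automorphism of `F₂ = FreeGroup Bool` swapping the two
free generators. For every nontrivial `g' ∈ F₂`, the set
`{γ⁻¹ σ(γ) g' σ(γ)⁻¹ γ : γ ∈ F₂}` is infinite. -/
theorem swap_twisted_conjugates_infinite
    (σ : FreeGroup Bool →* FreeGroup Bool)
    (hσ : σ = FreeGroup.lift (fun x => FreeGroup.of (!x)))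
    (g' : FreeGroup Bool) (hg' : g' ≠ 1) :
    (Set.range fun γ : FreeGroup Bool => γ⁻¹ * σ γ * g' * (σ γ)⁻¹ * γ).Infinite := by
  classical
  by_contra hfin
  rw [Set.not_infinite] at hfin
  haveI := hfin.to_subtype
  have hσa : ∀ n : ℕ, σ (FreeGroup.of false ^ n) = FreeGroup.of true ^ n := by
    intro n
    rw [_root_.map_pow, hσ]
    simp
  let ψ : ℕ → ↥(Set.range fun γ : FreeGroup Bool => γ⁻¹ * σ γ * g' * (σ γ)⁻¹ * γ) :=
    fun n => ⟨(FreeGroup.of false ^ n)⁻¹ * σ (FreeGroup.of false ^ n) * g' *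
        (σ (FreeGroup.of false ^ n))⁻¹ * FreeGroup.of false ^ n,
      ⟨FreeGroup.of false ^ n, rfl⟩⟩
  obtain ⟨v, hv⟩ := Finite.exists_infinite_fiber ψ
  have hT : (ψ ⁻¹' {v}).Infinite := Set.infinite_coe_iff.mp hv
  obtain ⟨n₁, hn₁⟩ := hT.nonempty
  obtain ⟨n₂, hn₂, h12⟩ := hT.exists_gt n₁
  obtain ⟨n₃, hn₃, h23⟩ := hT.exists_gt n₂
  have m1 : ψ n₁ = v := hn₁
  have m2 : ψ n₂ = v := hn₂
  have m3 : ψ n₃ = v := hn₃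
  -- From a coincidence of values, extract a twisted commutation relation.
  have key : ∀ k : ℕ, ψ n₁ = ψ (n₁ + k) →
      Commute (SwapTC.rep ((FreeGroup.of true ^ k)⁻¹ * FreeGroup.of false ^ k))
        (SwapTC.rep (FreeGroup.of true ^ n₁ * g' * (FreeGroup.of true ^ n₁)⁻¹)) := by
    intro k hk
    have E : (FreeGroup.of false ^ n₁)⁻¹ * σ (FreeGroup.of false ^ n₁) * g' *
          (σ (FreeGroup.of false ^ n₁))⁻¹ * FreeGroup.of false ^ n₁
        = (FreeGroup.of false ^ (n₁ + k))⁻¹ * σ (FreeGroup.of false ^ (n₁ + k)) * g' *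
          (σ (FreeGroup.of false ^ (n₁ + k)))⁻¹ * FreeGroup.of false ^ (n₁ + k) :=
      congrArg Subtype.val hk
    rw [hσa, hσa] at E
    set a₀ : FreeGroup Bool := FreeGroup.of false
    set b₀ : FreeGroup Bool := FreeGroup.of true
    have e1 : a₀ ^ k * (b₀ ^ n₁ * g' * (b₀ ^ n₁)⁻¹) * (a₀ ^ k)⁻¹
        = b₀ ^ k * (b₀ ^ n₁ * g' * (b₀ ^ n₁)⁻¹) * (b₀ ^ k)⁻¹ := by
      calc a₀ ^ k * (b₀ ^ n₁ * g' * (b₀ ^ n₁)⁻¹) * (a₀ ^ k)⁻¹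
          = a₀ ^ (n₁ + k) * ((a₀ ^ n₁)⁻¹ * b₀ ^ n₁ * g' * (b₀ ^ n₁)⁻¹ * a₀ ^ n₁) *
              (a₀ ^ (n₁ + k))⁻¹ := by group
        _ = a₀ ^ (n₁ + k) * ((a₀ ^ (n₁ + k))⁻¹ * b₀ ^ (n₁ + k) * g' * (b₀ ^ (n₁ + k))⁻¹ *
              a₀ ^ (n₁ + k)) * (a₀ ^ (n₁ + k))⁻¹ := by rw [E]
        _ = b₀ ^ k * (b₀ ^ n₁ * g' * (b₀ ^ n₁)⁻¹) * (b₀ ^ k)⁻¹ := by group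
    have hcomm : ((b₀ ^ k)⁻¹ * a₀ ^ k) * (b₀ ^ n₁ * g' * (b₀ ^ n₁)⁻¹)
        = (b₀ ^ n₁ * g' * (b₀ ^ n₁)⁻¹) * ((b₀ ^ k)⁻¹ * a₀ ^ k) := by
      calc ((b₀ ^ k)⁻¹ * a₀ ^ k) * (b₀ ^ n₁ * g' * (b₀ ^ n₁)⁻¹)
          = (b₀ ^ k)⁻¹ * (a₀ ^ k * (b₀ ^ n₁ * g' * (b₀ ^ n₁)⁻¹) * (a₀ ^ k)⁻¹) * a₀ ^ k := by
            group
        _ = (b₀ ^ k)⁻¹ * (b₀ ^ k * (b₀ ^ n₁ * g' * (b₀ ^ n₁)⁻¹) * (b₀ ^ k)⁻¹) * a₀ ^ k := by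
            rw [e1]
        _ = (b₀ ^ n₁ * g' * (b₀ ^ n₁)⁻¹) * ((b₀ ^ k)⁻¹ * a₀ ^ k) := by group
    exact (show Commute ((b₀ ^ k)⁻¹ * a₀ ^ k) (b₀ ^ n₁ * g' * (b₀ ^ n₁)⁻¹) from hcomm).map
      SwapTC.rep
  have hk₂ : 0 < n₂ - n₁ := by omega
  have hk₃ : 0 < n₃ - n₁ := by omega
  have C₂ := key (n₂ - n₁) (by rw [m1, show n₁ + (n₂ - n₁) = n₂ by omega, m2])
  have C₃ := key (n₃ - n₁) (by rw [m1, show n₁ + (n₃ - n₁) = n₃ by omega, m3])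
  set M : SwapTC.SL2 :=
    SwapTC.rep (FreeGroup.of true ^ n₁ * g' * (FreeGroup.of true ^ n₁)⁻¹) with hMdef
  have hco₂ : (M : SwapTC.Mat2) *
        !![1, 2*((n₂ - n₁ : ℕ):ℤ); -(2*((n₂ - n₁ : ℕ):ℤ)), 1 - 4*((n₂ - n₁ : ℕ):ℤ)^2] =
      !![1, 2*((n₂ - n₁ : ℕ):ℤ); -(2*((n₂ - n₁ : ℕ):ℤ)), 1 - 4*((n₂ - n₁ : ℕ):ℤ)^2] *
        (M : SwapTC.Mat2) := by
    have hcoe := congrArg (fun N : SwapTC.SL2 => (N : SwapTC.Mat2)) C₂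
    simp only [Matrix.SpecialLinearGroup.coe_mul] at hcoe
    rw [SwapTC.ucoe] at hcoe
    exact hcoe.symm
  have hco₃ : (M : SwapTC.Mat2) *
        !![1, 2*((n₃ - n₁ : ℕ):ℤ); -(2*((n₃ - n₁ : ℕ):ℤ)), 1 - 4*((n₃ - n₁ : ℕ):ℤ)^2] =
      !![1, 2*((n₃ - n₁ : ℕ):ℤ); -(2*((n₃ - n₁ : ℕ):ℤ)), 1 - 4*((n₃ - n₁ : ℕ):ℤ)^2] *
        (M : SwapTC.Mat2) := by
    have hcoe := congrArg (fun N : SwapTC.SL2 => (N : SwapTC.Mat2)) C₃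
    simp only [Matrix.SpecialLinearGroup.coe_mul] at hcoe
    rw [SwapTC.ucoe] at hcoe
    exact hcoe.symm
  obtain ⟨q₂, r₂⟩ := SwapTC.comm_entries _ hk₂ _ hco₂
  obtain ⟨q₃, r₃⟩ := SwapTC.comm_entries _ hk₃ _ hco₃
  have hβ : (M : SwapTC.Mat2) 0 1 = 0 := by
    have hkk : ((n₂ - n₁ : ℕ):ℤ) < ((n₃ - n₁ : ℕ):ℤ) := by
      have : (n₂ - n₁ : ℕ) < (n₃ - n₁ : ℕ) := by omega
      exact_mod_cast this
    have e : (((n₃ - n₁ : ℕ):ℤ) - ((n₂ - n₁ : ℕ):ℤ)) * (2 * (M : SwapTC.Mat2) 0 1) = 0 := by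
      nlinarith [r₂, r₃]
    rcases mul_eq_zero.1 e with h1 | h1
    · omega
    · omega
  have hγ : (M : SwapTC.Mat2) 1 0 = 0 := by rw [q₂, hβ]; ring
  have hδ : (M : SwapTC.Mat2) 1 1 = (M : SwapTC.Mat2) 0 0 := by rw [r₂, hβ]; ring
  have hdet : ((M : SwapTC.Mat2)).det = 1 := M.2
  rw [Matrix.det_fin_two] at hdet
  have hαα : (M : SwapTC.Mat2) 0 0 * (M : SwapTC.Mat2) 0 0 = 1 := by
    rw [← hδ] at hdet ⊢
    rw [hβ, hγ] at hdet
    linarith [hdet]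
  rcases mul_self_eq_one_iff.1 hαα with h1 | h1
  · -- M = 1 : contradiction with injectivity and g' ≠ 1
    have hMat : (M : SwapTC.Mat2) = 1 := by
      ext i j
      fin_cases i <;> fin_cases j <;>
        simp [Matrix.one_apply, hβ, hγ, hδ, h1]
    have hM1 : M = 1 := by
      apply Subtype.coe_injective
      show (M : SwapTC.Mat2) = ((1 : SwapTC.SL2) : SwapTC.Mat2)
      rw [hMat]
      exact Matrix.SpecialLinearGroup.coe_one.symm
    have hg1 : FreeGroup.of true ^ n₁ * g' * (FreeGroup.of true ^ n₁)⁻¹ = 1 := by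
      apply SwapTC.rep_inj
      rw [_root_.map_one]
      exact hM1
    apply hg'
    calc g' = (FreeGroup.of true ^ n₁)⁻¹ *
          (FreeGroup.of true ^ n₁ * g' * (FreeGroup.of true ^ n₁)⁻¹) *
          FreeGroup.of true ^ n₁ := by group
      _ = 1 := by rw [hg1]; group
  · -- M = -1 : contradiction with the mod 4 congruence
    obtain ⟨t, ht⟩ := (SwapTC.rep_mod4
      (FreeGroup.of true ^ n₁ * g' * (FreeGroup.of true ^ n₁)⁻¹)).1
    have : (M : SwapTC.Mat2) 0 0 - 1 = 4 * t := ht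
    omega
end
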